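/- arXiv:2011.14374 — 6 statements merged into one kernel-verified Lean document; each statement's English description precedes it below -/
import Mathlib

section
/- Let a ∈ L¹_loc([0,∞); ℂ) and let P, P_* be the solutions of the Krein system with coefficient a. Then for all λ, μ ∈ ℂ and all r ≥ 0 the Christoffel–Darboux formula holds: P(r,λ) conj(P(r,μ)) − P_*(r,λ) conj(P_*(r,μ)) = i(λ − conj(μ)) ∫₀^r P(s,λ) conj(P(s,μ)) ds. In particular, taking μ = λ, one has |P_*(r,λ)|² = |P(r,λ)|² + 2 Im(λ) ∫₀^r |P(s,λ)|² ds. -/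
open MeasureTheory Filter

noncomputable section

open intervalIntegral Set

namespace KreinCD

lemma integrable_conj {α} [MeasurableSpace α] {μ : Measure α} {f : α → ℂ}
    (h : Integrable f μ) : Integrable (fun x => (starRingEnd ℂ) (f x)) μ := by
  refine ⟨RCLike.continuous_conj.comp_aestronglyMeasurable h.1, ?_⟩
  simpa only [HasFiniteIntegral, RCLike.enorm_conj] using h.2

lemma conj_intervalIntegral (f : ℝ → ℂ) (a b : ℝ) :
    (starRingEnd ℂ) (∫ x in a..b, f x) = ∫ x in a..b, (starRingEnd ℂ) (f x) := by
  rw [intervalIntegral, intervalIntegral, map_sub, ← integral_conj, ← integral_conj]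

/-- Fubini on the triangle. -/
lemma triangle {U V : ℝ → ℂ} {r : ℝ} (hr : 0 ≤ r)
    (hU : IntegrableOn U (Set.Ioc 0 r)) (hV : IntegrableOn V (Set.Ioc 0 r)) :
    ((∫ s in Set.Ioc (0:ℝ) r, U s * ∫ t in Set.Ioc (0:ℝ) s, V t) +
      ∫ t in Set.Ioc (0:ℝ) r, (∫ s in Set.Ioc (0:ℝ) t, U s) * V t)
      = (∫ s in Set.Ioc (0:ℝ) r, U s) * ∫ t in Set.Ioc (0:ℝ) r, V t := by
  set μ := volume.restrict (Set.Ioc (0:ℝ) r) with hμ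
  have hmeas : MeasurableSet {p : ℝ × ℝ | p.2 ≤ p.1} :=
    measurableSet_le measurable_snd measurable_fst
  have hF : Integrable ({p : ℝ × ℝ | p.2 ≤ p.1}.indicator fun p => U p.1 * V p.2)
      (μ.prod μ) := (hU.mul_prod hV).indicator hmeas
  have swap := MeasureTheory.integral_integral_swap
    (f := fun x y => {p : ℝ × ℝ | p.2 ≤ p.1}.indicator (fun p => U p.1 * V p.2) (x, y)) hF
  -- compute the left side of `swap`
  have h1 : (∫ x, ∫ y, {p : ℝ × ℝ | p.2 ≤ p.1}.indicator
        (fun p => U p.1 * V p.2) (x, y) ∂μ ∂μ)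
      = ∫ s in Set.Ioc (0:ℝ) r, U s * ∫ t in Set.Ioc (0:ℝ) s, V t := by
    refine setIntegral_congr_fun measurableSet_Ioc (fun x hx => ?_)
    have : (fun y => {p : ℝ × ℝ | p.2 ≤ p.1}.indicator (fun p => U p.1 * V p.2) (x, y))
        = (Set.Iic x).indicator (fun y => U x * V y) := by
      ext y
      by_cases h : y ≤ x <;> simp [Set.indicator_apply, h]
    rw [this, setIntegral_indicator measurableSet_Iic, Set.Ioc_inter_Iic,
      min_eq_right hx.2, MeasureTheory.integral_const_mul]
  -- compute the right side of `swap`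
  have intUy : IntegrableOn (fun y => (∫ s in Set.Ioc (0:ℝ) y, U s) * V y)
      (Set.Ioc 0 r) := by
    have hUi : IntervalIntegrable U volume 0 r := by
      rw [intervalIntegrable_iff, Set.uIoc_of_le hr]; exact hU
    have hVi : IntervalIntegrable V volume 0 r := by
      rw [intervalIntegrable_iff, Set.uIoc_of_le hr]; exact hV
    have cont : ContinuousOn (fun y => ∫ s in (0:ℝ)..y, U s) (Set.uIcc 0 r) :=
      continuousOn_primitive_interval' hUi left_mem_uIcc
    have h2 : IntervalIntegrable (fun y => (∫ s in (0:ℝ)..y, U s) * V y) volume 0 r :=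
      hVi.continuousOn_mul cont
    rw [intervalIntegrable_iff, Set.uIoc_of_le hr] at h2
    refine h2.congr_fun (fun y hy => ?_) measurableSet_Ioc
    dsimp only; rw [intervalIntegral.integral_of_le hy.1.le]
  have h2 : (∫ y, ∫ x, {p : ℝ × ℝ | p.2 ≤ p.1}.indicator
        (fun p => U p.1 * V p.2) (x, y) ∂μ ∂μ)
      = (∫ s in Set.Ioc (0:ℝ) r, U s) * (∫ t in Set.Ioc (0:ℝ) r, V t)
        - ∫ t in Set.Ioc (0:ℝ) r, (∫ s in Set.Ioc (0:ℝ) t, U s) * V t := by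
    have step : ∀ y ∈ Set.Ioc (0:ℝ) r,
        (∫ x, {p : ℝ × ℝ | p.2 ≤ p.1}.indicator (fun p => U p.1 * V p.2) (x, y) ∂μ)
        = ((∫ s in Set.Ioc (0:ℝ) r, U s) - ∫ s in Set.Ioc (0:ℝ) y, U s) * V y := by
      intro y hy
      have : (fun x => {p : ℝ × ℝ | p.2 ≤ p.1}.indicator (fun p => U p.1 * V p.2) (x, y))
          = (Set.Ici y).indicator (fun x => U x * V y) := by
        ext x
        by_cases h : y ≤ x <;> simp [Set.indicator_apply, h]
      rw [this, setIntegral_indicator measurableSet_Ici]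
      have hset : Set.Ioc (0:ℝ) r ∩ Set.Ici y = Set.Icc y r := by
        ext x
        constructor
        · rintro ⟨⟨_, h2⟩, h3⟩; exact ⟨h3, h2⟩
        · rintro ⟨h1', h2⟩; exact ⟨⟨lt_of_lt_of_le hy.1 h1', h2⟩, h1'⟩
      rw [hset, setIntegral_congr_set Ioc_ae_eq_Icc.symm, MeasureTheory.integral_mul_const]
      have hunion : Set.Ioc (0:ℝ) y ∪ Set.Ioc y r = Set.Ioc 0 r :=
        Set.Ioc_union_Ioc_eq_Ioc hy.1.le hy.2
      have hItot : (∫ s in Set.Ioc (0:ℝ) r, U s)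
          = (∫ s in Set.Ioc (0:ℝ) y, U s) + ∫ s in Set.Ioc y r, U s := by
        rw [← hunion]
        exact setIntegral_union (Set.Ioc_disjoint_Ioc_of_le le_rfl) measurableSet_Ioc
          (hU.mono_set (by rw [← hunion]; exact Set.subset_union_left))
          (hU.mono_set (by rw [← hunion]; exact Set.subset_union_right))
      rw [hItot]; ring
    rw [setIntegral_congr_fun measurableSet_Ioc step]
    have hsplit : ∀ y ∈ Set.Ioc (0:ℝ) r,
        ((∫ s in Set.Ioc (0:ℝ) r, U s) - ∫ s in Set.Ioc (0:ℝ) y, U s) * V y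
        = (∫ s in Set.Ioc (0:ℝ) r, U s) * V y
          - (∫ s in Set.Ioc (0:ℝ) y, U s) * V y := fun y _ => by ring
    rw [setIntegral_congr_fun measurableSet_Ioc hsplit,
      integral_sub (hV.const_mul _) intUy, MeasureTheory.integral_const_mul]
  rw [h1, h2] at swap
  rw [swap]; ring
  -- swap : first = total - second, goal : first + second = total


/-- Product rule in integral form. -/
lemma prod_rule {u v U V : ℝ → ℂ} {r : ℝ} (hr : 0 ≤ r)
    (hU : IntervalIntegrable U volume 0 r) (hV : IntervalIntegrable V volume 0 r)
    (hu : ∀ s ∈ Set.Icc (0:ℝ) r, u s = 1 + ∫ t in (0:ℝ)..s, U t)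
    (hv : ∀ s ∈ Set.Icc (0:ℝ) r, v s = 1 + ∫ t in (0:ℝ)..s, V t) :
    IntervalIntegrable (fun s => U s * v s + u s * V s) volume 0 r ∧
    u r * v r = 1 + ∫ s in (0:ℝ)..r, (U s * v s + u s * V s) := by
  have huIcc : Set.uIcc (0:ℝ) r = Set.Icc 0 r := Set.uIcc_of_le hr
  have cU : ContinuousOn (fun s => ∫ t in (0:ℝ)..s, U t) (Set.uIcc 0 r) :=
    continuousOn_primitive_interval' hU left_mem_uIcc
  have cV : ContinuousOn (fun s => ∫ t in (0:ℝ)..s, V t) (Set.uIcc 0 r) :=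
    continuousOn_primitive_interval' hV left_mem_uIcc
  have cu : ContinuousOn u (Set.uIcc 0 r) := by
    refine ContinuousOn.congr ((continuousOn_const (c := (1:ℂ))).add cU) fun s hs => ?_
    rw [huIcc] at hs; exact hu s hs
  have cv : ContinuousOn v (Set.uIcc 0 r) := by
    refine ContinuousOn.congr ((continuousOn_const (c := (1:ℂ))).add cV) fun s hs => ?_
    rw [huIcc] at hs; exact hv s hs
  have hUv : IntervalIntegrable (fun s => U s * v s) volume 0 r := hU.mul_continuousOn cv
  have huV : IntervalIntegrable (fun s => u s * V s) volume 0 r := hV.continuousOn_mul cu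
  refine ⟨hUv.add huV, ?_⟩
  have e1 : (∫ s in (0:ℝ)..r, U s * v s)
      = (∫ s in (0:ℝ)..r, U s) + ∫ s in (0:ℝ)..r, U s * ∫ t in (0:ℝ)..s, V t := by
    have heq : Set.EqOn (fun s => U s * v s)
        (fun s => U s + U s * ∫ t in (0:ℝ)..s, V t) (Set.uIcc 0 r) := fun s hs => by
      rw [huIcc] at hs
      simp only [hv s hs]; ring
    rw [intervalIntegral.integral_congr heq,
      intervalIntegral.integral_add hU (hU.mul_continuousOn cV)]
  have e2 : (∫ s in (0:ℝ)..r, u s * V s)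
      = (∫ s in (0:ℝ)..r, V s) + ∫ s in (0:ℝ)..r, (∫ t in (0:ℝ)..s, U t) * V s := by
    have heq : Set.EqOn (fun s => u s * V s)
        (fun s => V s + (∫ t in (0:ℝ)..s, U t) * V s) (Set.uIcc 0 r) := fun s hs => by
      rw [huIcc] at hs
      simp only [hu s hs]; ring
    rw [intervalIntegral.integral_congr heq,
      intervalIntegral.integral_add hV (hV.continuousOn_mul cU)]
  have hUIoc : IntegrableOn U (Set.Ioc 0 r) := by
    rwa [intervalIntegrable_iff, Set.uIoc_of_le hr] at hU
  have hVIoc : IntegrableOn V (Set.Ioc 0 r) := by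
    rwa [intervalIntegrable_iff, Set.uIoc_of_le hr] at hV
  have tri := triangle hr hUIoc hVIoc
  have k1 : (∫ s in (0:ℝ)..r, U s * ∫ t in (0:ℝ)..s, V t)
      = ∫ s in Set.Ioc (0:ℝ) r, U s * ∫ t in Set.Ioc (0:ℝ) s, V t := by
    rw [intervalIntegral.integral_of_le hr]
    exact setIntegral_congr_fun measurableSet_Ioc fun s hs => by
      rw [intervalIntegral.integral_of_le hs.1.le]
  have k2 : (∫ s in (0:ℝ)..r, (∫ t in (0:ℝ)..s, U t) * V s)
      = ∫ s in Set.Ioc (0:ℝ) r, (∫ t in Set.Ioc (0:ℝ) s, U t) * V s := by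
    rw [intervalIntegral.integral_of_le hr]
    exact setIntegral_congr_fun measurableSet_Ioc fun s hs => by
      rw [intervalIntegral.integral_of_le hs.1.le]
  have k3 : (∫ s in (0:ℝ)..r, U s) = ∫ s in Set.Ioc (0:ℝ) r, U s :=
    intervalIntegral.integral_of_le hr
  have k4 : (∫ s in (0:ℝ)..r, V s) = ∫ s in Set.Ioc (0:ℝ) r, V s :=
    intervalIntegral.integral_of_le hr
  rw [hu r ⟨hr, le_rfl⟩, hv r ⟨hr, le_rfl⟩,
    intervalIntegral.integral_add hUv huV, e1, e2, k1, k2, k3, k4]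
  linear_combination -tri

end KreinCD

open KreinCD

/-- A Krein system with coefficient `a ∈ L¹_loc([0,∞); ℂ)`, in integral form:
`P` and `Ps` (= `P_*`) are locally absolutely continuous in `r` and satisfy
`∂P/∂r = iλP - conj(a)P_*`, `P(0,λ)=1` and `∂P_*/∂r = -aP`, `P_*(0,λ)=1`. -/
def IsKreinSystem (a : ℝ → ℂ) (P Ps : ℝ → ℂ → ℂ) : Prop :=
  MeasureTheory.LocallyIntegrableOn a (Set.Ici 0) ∧
  (∀ z : ℂ, ContinuousOn (fun r => P r z) (Set.Ici 0)) ∧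
  (∀ z : ℂ, ContinuousOn (fun r => Ps r z) (Set.Ici 0)) ∧
  ∀ z : ℂ, ∀ r : ℝ, 0 ≤ r →
    (P r z = 1 + ∫ s in (0:ℝ)..r,
        (Complex.I * z * P s z - (starRingEnd ℂ) (a s) * Ps s z)) ∧
    (Ps r z = 1 - ∫ s in (0:ℝ)..r, a s * P s z)

/-- The Christoffel–Darboux formula for Krein systems, together with its special case
`μ = λ`: `|P_*(r,λ)|² = |P(r,λ)|² + 2 Im(λ) ∫₀^r |P(s,λ)|² ds`. -/
theorem krein_christoffel_darboux
    (a : ℝ → ℂ) (P Ps : ℝ → ℂ → ℂ)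
    (hK : IsKreinSystem a P Ps) :
    (∀ lam mu : ℂ, ∀ r : ℝ, 0 ≤ r →
      P r lam * (starRingEnd ℂ) (P r mu) - Ps r lam * (starRingEnd ℂ) (Ps r mu)
        = Complex.I * (lam - (starRingEnd ℂ) mu) *
            ∫ s in (0:ℝ)..r, P s lam * (starRingEnd ℂ) (P s mu)) ∧
    (∀ lam : ℂ, ∀ r : ℝ, 0 ≤ r →
      ‖Ps r lam‖ ^ 2 = ‖P r lam‖ ^ 2 + 2 * lam.im * ∫ s in (0:ℝ)..r, ‖P s lam‖ ^ 2) := by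
  obtain ⟨ha, hPc, hPsc, heq⟩ := hK
  have haInt : ∀ r : ℝ, 0 ≤ r → IntervalIntegrable a volume 0 r := fun r hr => by
    have h1 : IntegrableOn a (Set.Icc 0 r) :=
      ha.integrableOn_compact_subset Set.Icc_subset_Ici_self isCompact_Icc
    rw [← Set.uIcc_of_le hr] at h1
    exact h1.intervalIntegrable
  have main : ∀ lam mu : ℂ, ∀ r : ℝ, 0 ≤ r →
      P r lam * (starRingEnd ℂ) (P r mu) - Ps r lam * (starRingEnd ℂ) (Ps r mu)
        = Complex.I * (lam - (starRingEnd ℂ) mu) *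
            ∫ s in (0:ℝ)..r, P s lam * (starRingEnd ℂ) (P s mu) := by
    intro lam mu r hr
    set U : ℝ → ℂ := fun s =>
      Complex.I * lam * P s lam - (starRingEnd ℂ) (a s) * Ps s lam with hUdef
    set V : ℝ → ℂ := fun s =>
      (starRingEnd ℂ) (Complex.I * mu * P s mu - (starRingEnd ℂ) (a s) * Ps s mu) with hVdef
    set U' : ℝ → ℂ := fun s => -(a s * P s lam) with hU'def
    set V' : ℝ → ℂ := fun s => (starRingEnd ℂ) (-(a s * P s mu)) with hV'def
    have hsub : Set.uIcc (0:ℝ) r ⊆ Set.Ici 0 := by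
      rw [Set.uIcc_of_le hr]; exact Set.Icc_subset_Ici_self
    have cP : ∀ z, ContinuousOn (fun s => P s z) (Set.uIcc 0 r) :=
      fun z => (hPc z).mono hsub
    have cPs : ∀ z, ContinuousOn (fun s => Ps s z) (Set.uIcc 0 r) :=
      fun z => (hPsc z).mono hsub
    have haI := haInt r hr
    have haC : IntervalIntegrable (fun s => (starRingEnd ℂ) (a s)) volume 0 r := by
      rw [intervalIntegrable_iff] at haI ⊢
      exact integrable_conj haI
    have hWi : ∀ z : ℂ, IntervalIntegrable
        (fun s => Complex.I * z * P s z - (starRingEnd ℂ) (a s) * Ps s z) volume 0 r :=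
      fun z => ((continuousOn_const.mul (cP z)).intervalIntegrable).sub
        (haC.mul_continuousOn (cPs z))
    have hUi : IntervalIntegrable U volume 0 r := hWi lam
    have hVi : IntervalIntegrable V volume 0 r := by
      have := hWi mu
      rw [intervalIntegrable_iff] at this ⊢
      exact integrable_conj this
    have hW'i : ∀ z : ℂ, IntervalIntegrable (fun s => -(a s * P s z)) volume 0 r :=
      fun z => (haI.mul_continuousOn (cP z)).neg
    have hU'i : IntervalIntegrable U' volume 0 r := hW'i lam
    have hV'i : IntervalIntegrable V' volume 0 r := by
      have := hW'i mu
      rw [intervalIntegrable_iff] at this ⊢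
      exact integrable_conj this
    have hu : ∀ s ∈ Set.Icc (0:ℝ) r, P s lam = 1 + ∫ t in (0:ℝ)..s, U t :=
      fun s hs => (heq lam s hs.1).1
    have hv : ∀ s ∈ Set.Icc (0:ℝ) r, (starRingEnd ℂ) (P s mu) = 1 + ∫ t in (0:ℝ)..s, V t :=
      fun s hs => by
        rw [(heq mu s hs.1).1, map_add, map_one, conj_intervalIntegral]
    have hu' : ∀ s ∈ Set.Icc (0:ℝ) r, Ps s lam = 1 + ∫ t in (0:ℝ)..s, U' t :=
      fun s hs => by
        rw [(heq lam s hs.1).2, hU'def, intervalIntegral.integral_neg]; ring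
    have hv' : ∀ s ∈ Set.Icc (0:ℝ) r, (starRingEnd ℂ) (Ps s mu) = 1 + ∫ t in (0:ℝ)..s, V' t :=
      fun s hs => by
        rw [(heq mu s hs.1).2, map_sub, map_one, conj_intervalIntegral]
        simp only [hV'def, map_neg, intervalIntegral.integral_neg]
        ring
    obtain ⟨hint1, e1⟩ := prod_rule hr hUi hVi hu hv
    obtain ⟨hint2, e2⟩ := prod_rule hr hU'i hV'i hu' hv'
    have key : P r lam * (starRingEnd ℂ) (P r mu) - Ps r lam * (starRingEnd ℂ) (Ps r mu)
        = ∫ s in (0:ℝ)..r,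
            ((U s * (starRingEnd ℂ) (P s mu) + P s lam * V s)
              - (U' s * (starRingEnd ℂ) (Ps s mu) + Ps s lam * V' s)) := by
      rw [e1, e2, intervalIntegral.integral_sub hint1 hint2]
      ring
    rw [key]
    have heq2 : Set.EqOn
        (fun s => (U s * (starRingEnd ℂ) (P s mu) + P s lam * V s)
          - (U' s * (starRingEnd ℂ) (Ps s mu) + Ps s lam * V' s))
        (fun s => Complex.I * (lam - (starRingEnd ℂ) mu) *
          (P s lam * (starRingEnd ℂ) (P s mu))) (Set.uIcc 0 r) := fun s _ => by
      simp only [hUdef, hVdef, hU'def, hV'def, map_sub, map_mul, map_neg,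
        Complex.conj_conj, Complex.conj_I]
      ring
    rw [intervalIntegral.integral_congr heq2, intervalIntegral.integral_const_mul]
  refine ⟨main, fun lam r hr => ?_⟩
  have h := main lam lam r hr
  have hnorm : ∀ z : ℂ, z * (starRingEnd ℂ) z = ((‖z‖^2 : ℝ) : ℂ) := fun z => by
    rw [Complex.mul_conj, Complex.normSq_eq_norm_sq]
  have hint : (∫ s in (0:ℝ)..r, P s lam * (starRingEnd ℂ) (P s lam))
      = (((∫ s in (0:ℝ)..r, ‖P s lam‖^2 : ℝ)) : ℂ) := by
    rw [← intervalIntegral.integral_ofReal]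
    exact intervalIntegral.integral_congr fun s _ => hnorm _
  rw [hnorm (P r lam), hnorm (Ps r lam), hint, Complex.sub_conj] at h
  have hI : Complex.I * ((2 * lam.im : ℝ) * Complex.I) = (-(2 * lam.im) : ℝ) := by
    rw [show Complex.I * ((2 * lam.im : ℝ) * Complex.I)
        = ((2 * lam.im : ℝ) : ℂ) * (Complex.I * Complex.I) by ring, Complex.I_mul_I]
    push_cast; ring
  rw [hI] at h
  push_cast at h
  have hc : ((‖Ps r lam‖^2 : ℝ) : ℂ)
      = ((‖P r lam‖^2 : ℝ) : ℂ)
        + 2 * (lam.im : ℂ) * (((∫ s in (0:ℝ)..r, ‖P s lam‖^2 : ℝ)) : ℂ) := by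
    push_cast
    linear_combination -h
  exact_mod_cast hc
end
end

section
/- Let a ∈ L¹_loc([0,∞); ℂ) and let P, P_* be the solutions of the Krein system with coefficient a. Then for every r > 0 and every λ ∈ ℂ: (1) if λ ∈ ℝ then |P_*(r,λ)| = |P(r,λ)|; (2) if Im(λ) > 0 then |P_*(r,λ)| > |P(r,λ)|; (3) if Im(λ) < 0 then |P_*(r,λ)| < |P(r,λ)|. -/
open MeasureTheory Filter

noncomputable section


lemma integrable_conj' {μ : Measure ℝ} {f : ℝ → ℂ} (hf : Integrable f μ) :
    Integrable (fun x => (starRingEnd ℂ) (f x)) μ :=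
  hf.norm.mono' (continuous_star.comp_aestronglyMeasurable hf.1)
    (Filter.Eventually.of_forall fun x => by simp)

lemma intervalIntegrable_conj' {f : ℝ → ℂ} {a b : ℝ} (hf : IntervalIntegrable f volume a b) :
    IntervalIntegrable (fun x => (starRingEnd ℂ) (f x)) volume a b :=
  ⟨integrable_conj' hf.1, integrable_conj' hf.2⟩

lemma intervalIntegral_conj' {f : ℝ → ℂ} {a b : ℝ} :
    (∫ x in a..b, (starRingEnd ℂ) (f x)) = (starRingEnd ℂ) (∫ x in a..b, f x) := by
  simp [intervalIntegral, integral_conj]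

lemma triangle_fubini {r : ℝ} (hr : 0 ≤ r) {f g : ℝ → ℂ}
    (hf : IntervalIntegrable f volume 0 r) (hg : IntervalIntegrable g volume 0 r) :
    (∫ s in (0:ℝ)..r, f s * ∫ t in (0:ℝ)..s, g t)
      + (∫ s in (0:ℝ)..r, (∫ t in (0:ℝ)..s, f t) * g s)
    = (∫ s in (0:ℝ)..r, f s) * (∫ s in (0:ℝ)..r, g s) := by
  have hf' : IntegrableOn f (Set.Ioc 0 r) volume :=
    (intervalIntegrable_iff_integrableOn_Ioc_of_le hr).mp hf
  have hg' : IntegrableOn g (Set.Ioc 0 r) volume :=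
    (intervalIntegrable_iff_integrableOn_Ioc_of_le hr).mp hg
  set μ : Measure ℝ := volume.restrict (Set.Ioc 0 r) with hμ
  have hF : Integrable (fun p : ℝ × ℝ => f p.1 * g p.2) (μ.prod μ) := hf'.mul_prod hg'
  have hA : MeasurableSet {p : ℝ × ℝ | p.2 ≤ p.1} :=
    measurableSet_le measurable_snd measurable_fst
  -- total integral
  have htot : ∫ p : ℝ × ℝ, f p.1 * g p.2 ∂(μ.prod μ)
      = (∫ s, f s ∂μ) * (∫ s, g s ∂μ) := by
    rw [integral_prod _ hF]
    simp_rw [integral_const_mul, integral_mul_const]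
  have hsplit : ∫ p : ℝ × ℝ, f p.1 * g p.2 ∂(μ.prod μ)
      = (∫ p : ℝ × ℝ, Set.indicator {p : ℝ × ℝ | p.2 ≤ p.1} (fun p => f p.1 * g p.2) p ∂(μ.prod μ))
      + (∫ p : ℝ × ℝ, Set.indicator {p : ℝ × ℝ | p.2 ≤ p.1}ᶜ (fun p => f p.1 * g p.2) p ∂(μ.prod μ)) := by
    rw [← integral_add (hF.indicator hA) (hF.indicator hA.compl)]
    congr 1
    ext p
    rw [Set.indicator_self_add_compl_apply]
  -- first triangle
  have h1 : (∫ p : ℝ × ℝ, Set.indicator {p : ℝ × ℝ | p.2 ≤ p.1} (fun p => f p.1 * g p.2) p ∂(μ.prod μ))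
      = ∫ s in Set.Ioc (0:ℝ) r, f s * ∫ t in Set.Ioc (0:ℝ) s, g t := by
    rw [integral_prod _ (hF.indicator hA)]
    refine setIntegral_congr_fun measurableSet_Ioc (fun s hs => ?_)
    have : (fun t => Set.indicator {p : ℝ × ℝ | p.2 ≤ p.1} (fun p => f p.1 * g p.2) (s, t))
        = Set.indicator (Set.Iic s) (fun t => f s * g t) := by
      ext t
      by_cases h : t ≤ s <;> simp [Set.indicator, h]
    rw [this, integral_indicator measurableSet_Iic, hμ, Measure.restrict_restrict measurableSet_Iic,
      Set.Iic_inter_Ioc_of_le hs.2, integral_const_mul]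
  -- second triangle
  have h2 : (∫ p : ℝ × ℝ, Set.indicator {p : ℝ × ℝ | p.2 ≤ p.1}ᶜ (fun p => f p.1 * g p.2) p ∂(μ.prod μ))
      = ∫ t in Set.Ioc (0:ℝ) r, (∫ s in Set.Ioc (0:ℝ) t, f s) * g t := by
    rw [integral_prod_symm _ (hF.indicator hA.compl)]
    refine setIntegral_congr_fun measurableSet_Ioc (fun t ht => ?_)
    have : (fun s => Set.indicator {p : ℝ × ℝ | p.2 ≤ p.1}ᶜ (fun p => f p.1 * g p.2) (s, t))
        = Set.indicator (Set.Iio t) (fun s => f s * g t) := by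
      ext s
      by_cases h : s < t <;> simp [Set.indicator, h, not_lt.mpr, not_le.mpr, le_of_not_gt, not_lt]
    rw [this, integral_indicator measurableSet_Iio, hμ,
      Measure.restrict_restrict measurableSet_Iio]
    have hset : Set.Iio t ∩ Set.Ioc 0 r = Set.Ioo 0 t := by
      ext s
      constructor
      · rintro ⟨h1, h2, h3⟩; exact ⟨h2, h1⟩
      · rintro ⟨h1, h2⟩; exact ⟨h2, h1, le_trans (le_of_lt h2) ht.2⟩
    rw [hset, ← integral_Ioc_eq_integral_Ioo, integral_mul_const]
  have e1 : (∫ s in (0:ℝ)..r, f s * ∫ t in (0:ℝ)..s, g t)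
      = ∫ s in Set.Ioc (0:ℝ) r, f s * ∫ t in Set.Ioc (0:ℝ) s, g t := by
    rw [intervalIntegral.integral_of_le hr]
    refine setIntegral_congr_fun measurableSet_Ioc (fun s hs => ?_)
    rw [intervalIntegral.integral_of_le hs.1.le]
  have e2 : (∫ s in (0:ℝ)..r, (∫ t in (0:ℝ)..s, f t) * g s)
      = ∫ s in Set.Ioc (0:ℝ) r, (∫ t in Set.Ioc (0:ℝ) s, f t) * g s := by
    rw [intervalIntegral.integral_of_le hr]
    refine setIntegral_congr_fun measurableSet_Ioc (fun s hs => ?_)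
    rw [intervalIntegral.integral_of_le hs.1.le]
  rw [e1, e2, intervalIntegral.integral_of_le hr, intervalIntegral.integral_of_le hr,
    ← h1, ← h2, ← hsplit, htot]

lemma primitive_mul {r : ℝ} (hr : 0 ≤ r) {f g u v : ℝ → ℂ} {c d : ℂ}
    (hf : IntervalIntegrable f volume 0 r) (hg : IntervalIntegrable g volume 0 r)
    (hu : ∀ s ∈ Set.Icc (0:ℝ) r, u s = c + ∫ t in (0:ℝ)..s, f t)
    (hv : ∀ s ∈ Set.Icc (0:ℝ) r, v s = d + ∫ t in (0:ℝ)..s, g t) :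
    u r * v r = c * d + ∫ s in (0:ℝ)..r, (f s * v s + u s * g s) := by
  have huIcc : Set.uIcc (0:ℝ) r = Set.Icc 0 r := Set.uIcc_of_le hr
  have hgp : ContinuousOn (fun s => ∫ t in (0:ℝ)..s, g t) (Set.Icc 0 r) := by
    have := intervalIntegral.continuousOn_primitive_interval'
      (μ := volume) (b₁ := (0:ℝ)) (b₂ := r) (a := (0:ℝ)) hg (by rw [huIcc]; exact ⟨le_rfl, hr⟩)
    rwa [huIcc] at this
  have hfp : ContinuousOn (fun s => ∫ t in (0:ℝ)..s, f t) (Set.Icc 0 r) := by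
    have := intervalIntegral.continuousOn_primitive_interval'
      (μ := volume) (b₁ := (0:ℝ)) (b₂ := r) (a := (0:ℝ)) hf (by rw [huIcc]; exact ⟨le_rfl, hr⟩)
    rwa [huIcc] at this
  have i1 : IntervalIntegrable (fun s => f s * (d + ∫ t in (0:ℝ)..s, g t)) volume 0 r :=
    hf.mul_continuousOn (by rw [huIcc]; exact continuousOn_const.add hgp)
  have i2 : IntervalIntegrable (fun s => (c + ∫ t in (0:ℝ)..s, f t) * g s) volume 0 r :=
    hg.continuousOn_mul (by rw [huIcc]; exact continuousOn_const.add hfp)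
  have hcong : (∫ s in (0:ℝ)..r, (f s * v s + u s * g s))
      = ∫ s in (0:ℝ)..r, (f s * (d + ∫ t in (0:ℝ)..s, g t) + (c + ∫ t in (0:ℝ)..s, f t) * g s) := by
    refine intervalIntegral.integral_congr (fun s hs => ?_)
    rw [huIcc] at hs
    rw [hu s hs, hv s hs]
  rw [hcong, intervalIntegral.integral_add i1 i2]
  have e1 : (∫ s in (0:ℝ)..r, f s * (d + ∫ t in (0:ℝ)..s, g t))
      = (∫ s in (0:ℝ)..r, f s) * d + ∫ s in (0:ℝ)..r, f s * ∫ t in (0:ℝ)..s, g t := by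
    rw [← intervalIntegral.integral_mul_const, ← intervalIntegral.integral_add
      (hf.mul_const d) (hf.mul_continuousOn (by rw [huIcc]; exact hgp))]
    congr 1; ext s; ring
  have e2 : (∫ s in (0:ℝ)..r, (c + ∫ t in (0:ℝ)..s, f t) * g s)
      = c * (∫ s in (0:ℝ)..r, g s) + ∫ s in (0:ℝ)..r, (∫ t in (0:ℝ)..s, f t) * g s := by
    rw [← intervalIntegral.integral_const_mul, ← intervalIntegral.integral_add
      (hg.const_mul c) (hg.continuousOn_mul (by rw [huIcc]; exact hfp))]
    congr 1; ext s; ring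
  rw [e1, e2, hu r ⟨hr, le_rfl⟩, hv r ⟨hr, le_rfl⟩]
  have := triangle_fubini hr hf hg
  linear_combination -this

lemma krein_normSq_identity {a : ℝ → ℂ} {P Ps : ℝ → ℂ → ℂ}
    (hK : IsKreinSystem a P Ps) (lam : ℂ) {r : ℝ} (hr : 0 ≤ r) :
    Complex.normSq (Ps r lam) - Complex.normSq (P r lam)
      = 2 * lam.im * ∫ s in (0:ℝ)..r, Complex.normSq (P s lam) := by
  obtain ⟨ha, hPc, hPsc, heq⟩ := id hK
  set F : ℝ → ℂ := fun s => Complex.I * lam * P s lam - (starRingEnd ℂ) (a s) * Ps s lam with hF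
  set G : ℝ → ℂ := fun s => -(a s * P s lam) with hG
  have hIcc : Set.Icc (0:ℝ) r ⊆ Set.Ici 0 := fun x hx => hx.1
  have huIcc : Set.uIcc (0:ℝ) r = Set.Icc 0 r := Set.uIcc_of_le hr
  have haInt : IntervalIntegrable a volume 0 r := by
    rw [intervalIntegrable_iff_integrableOn_Ioc_of_le hr]
    exact (ha.integrableOn_compact_subset hIcc isCompact_Icc).mono_set Set.Ioc_subset_Icc_self
  have hPcc : ContinuousOn (fun s => P s lam) (Set.Icc 0 r) := (hPc lam).mono hIcc
  have hPscc : ContinuousOn (fun s => Ps s lam) (Set.Icc 0 r) := (hPsc lam).mono hIcc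
  have hPconj : ContinuousOn (fun s => (starRingEnd ℂ) (P s lam)) (Set.Icc 0 r) :=
    continuous_star.comp_continuousOn hPcc
  have hPsconj : ContinuousOn (fun s => (starRingEnd ℂ) (Ps s lam)) (Set.Icc 0 r) :=
    continuous_star.comp_continuousOn hPscc
  have hFint : IntervalIntegrable F volume 0 r := by
    apply IntervalIntegrable.sub
    · apply ContinuousOn.intervalIntegrable
      rw [huIcc]; exact continuousOn_const.mul hPcc
    · exact (intervalIntegrable_conj' haInt).mul_continuousOn (by rw [huIcc]; exact hPscc)
  have hGint : IntervalIntegrable G volume 0 r :=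
    (haInt.mul_continuousOn (by rw [huIcc]; exact hPcc)).neg
  have hFc := intervalIntegrable_conj' hFint
  have hGc := intervalIntegrable_conj' hGint
  have hu : ∀ s ∈ Set.Icc (0:ℝ) r, P s lam = 1 + ∫ t in (0:ℝ)..s, F t :=
    fun s hs => (heq lam s hs.1).1
  have hv : ∀ s ∈ Set.Icc (0:ℝ) r, Ps s lam = 1 + ∫ t in (0:ℝ)..s, G t := by
    intro s hs
    rw [(heq lam s hs.1).2, sub_eq_add_neg, ← intervalIntegral.integral_neg]
  have huc : ∀ s ∈ Set.Icc (0:ℝ) r,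
      (starRingEnd ℂ) (P s lam) = 1 + ∫ t in (0:ℝ)..s, (starRingEnd ℂ) (F t) := by
    intro s hs
    rw [hu s hs, map_add, map_one, ← intervalIntegral_conj']
  have hvc : ∀ s ∈ Set.Icc (0:ℝ) r,
      (starRingEnd ℂ) (Ps s lam) = 1 + ∫ t in (0:ℝ)..s, (starRingEnd ℂ) (G t) := by
    intro s hs
    rw [hv s hs, map_add, map_one, ← intervalIntegral_conj']
  have hPP := primitive_mul hr hFint hFc hu huc
  have hQQ := primitive_mul hr hGint hGc hv hvc
  have iP : IntervalIntegrable
      (fun s => F s * (starRingEnd ℂ) (P s lam) + P s lam * (starRingEnd ℂ) (F s)) volume 0 r :=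
    (hFint.mul_continuousOn (by rw [huIcc]; exact hPconj)).add
      (hFc.continuousOn_mul (by rw [huIcc]; exact hPcc))
  have iQ : IntervalIntegrable
      (fun s => G s * (starRingEnd ℂ) (Ps s lam) + Ps s lam * (starRingEnd ℂ) (G s)) volume 0 r :=
    (hGint.mul_continuousOn (by rw [huIcc]; exact hPsconj)).add
      (hGc.continuousOn_mul (by rw [huIcc]; exact hPscc))
  have key : ∀ s : ℝ,
      (G s * (starRingEnd ℂ) (Ps s lam) + Ps s lam * (starRingEnd ℂ) (G s))
        - (F s * (starRingEnd ℂ) (P s lam) + P s lam * (starRingEnd ℂ) (F s))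
      = ((2 * lam.im : ℝ) : ℂ) * (P s lam * (starRingEnd ℂ) (P s lam)) := by
    intro s
    have h1 := Complex.sub_conj lam
    have h2 := Complex.I_mul_I
    simp only [hF, hG, map_sub, map_mul, map_neg, Complex.conj_I, Complex.conj_conj]
    push_cast at h1 ⊢
    linear_combination (-Complex.I * P s lam * (starRingEnd ℂ) (P s lam)) * h1 +
      (-(2 * (lam.im : ℂ)) * P s lam * (starRingEnd ℂ) (P s lam)) * h2
  have main : Ps r lam * (starRingEnd ℂ) (Ps r lam) - P r lam * (starRingEnd ℂ) (P r lam)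
      = ∫ s in (0:ℝ)..r, ((2 * lam.im : ℝ) : ℂ) * (P s lam * (starRingEnd ℂ) (P s lam)) := by
    rw [hPP, hQQ, ← intervalIntegral.integral_congr (fun s _ => key s),
      intervalIntegral.integral_sub iQ iP]
    ring
  have main2 : ((Complex.normSq (Ps r lam) - Complex.normSq (P r lam) : ℝ) : ℂ)
      = ((∫ s in (0:ℝ)..r, 2 * lam.im * Complex.normSq (P s lam) : ℝ) : ℂ) := by
    push_cast
    rw [← Complex.mul_conj, ← Complex.mul_conj, main, ← intervalIntegral.integral_ofReal]
    apply intervalIntegral.integral_congr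
    intro s _
    push_cast
    rw [← Complex.mul_conj]
  have main3 : Complex.normSq (Ps r lam) - Complex.normSq (P r lam)
      = ∫ s in (0:ℝ)..r, 2 * lam.im * Complex.normSq (P s lam) := by
    exact_mod_cast main2
  rw [main3, ← intervalIntegral.integral_const_mul]

/-- Comparison of `|P_*(r,λ)|` and `|P(r,λ)|` according to the sign of `Im λ`. -/
theorem krein_modulus_comparison
    (a : ℝ → ℂ) (P Ps : ℝ → ℂ → ℂ)
    (hK : IsKreinSystem a P Ps) :
    ∀ r : ℝ, 0 < r → ∀ lam : ℂ,
      (lam.im = 0 → ‖Ps r lam‖ = ‖P r lam‖) ∧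
      (0 < lam.im → ‖P r lam‖ < ‖Ps r lam‖) ∧
      (lam.im < 0 → ‖Ps r lam‖ < ‖P r lam‖) := by
  intro r hr lam
  have hr' : (0:ℝ) ≤ r := hr.le
  obtain ⟨ha, hPc, hPsc, heq⟩ := id hK
  set h : ℝ → ℝ := fun s => Complex.normSq (P s lam) with hh
  have hIcc : Set.Icc (0:ℝ) r ⊆ Set.Ici 0 := fun x hx => hx.1
  have hcont : ContinuousOn h (Set.Icc 0 r) :=
    Complex.continuous_normSq.comp_continuousOn ((hPc lam).mono hIcc)
  have hP0 : P 0 lam = 1 := by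
    have := (heq lam 0 le_rfl).1
    simpa using this
  have hh0 : h 0 = 1 := by simp [hh, hP0]
  -- the integral of h over (0, r) is positive
  have hint : IntervalIntegrable h volume 0 r := by
    apply ContinuousOn.intervalIntegrable
    rwa [Set.uIcc_of_le hr']
  have hpos : 0 < ∫ s in (0:ℝ)..r, h s := by
    have hcw : ContinuousWithinAt h (Set.Icc 0 r) 0 := hcont 0 ⟨le_rfl, hr'⟩
    have hev : h ⁻¹' Set.Ioi (1/2 : ℝ) ∈ nhdsWithin 0 (Set.Icc 0 r) := by
      apply hcw
      rw [hh0]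
      exact Ioi_mem_nhds (by norm_num)
    obtain ⟨ε, hε, hball⟩ := Metric.mem_nhdsWithin_iff.mp hev
    set δ : ℝ := min (ε/2) r with hδdef
    have hδpos : 0 < δ := lt_min (by linarith) hr
    have hδr : δ ≤ r := min_le_right _ _
    have hδhalf : ∀ s ∈ Set.Icc (0:ℝ) δ, (1/2 : ℝ) ≤ h s := by
      intro s hs
      have hsε : s ∈ Metric.ball (0:ℝ) ε := by
        rw [Metric.mem_ball, Real.dist_eq, sub_zero, abs_of_nonneg hs.1]
        have := hs.2
        have : s ≤ ε/2 := le_trans this (min_le_left _ _)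
        linarith
      have hsIcc : s ∈ Set.Icc (0:ℝ) r := ⟨hs.1, le_trans hs.2 hδr⟩
      exact le_of_lt (hball ⟨hsε, hsIcc⟩)
    have hi1 : IntervalIntegrable h volume 0 δ :=
      hint.mono_set (by rw [Set.uIcc_of_le hδpos.le, Set.uIcc_of_le hr']; exact Set.Icc_subset_Icc le_rfl hδr)
    have hi2 : IntervalIntegrable h volume δ r :=
      hint.mono_set (by rw [Set.uIcc_of_le hδr, Set.uIcc_of_le hr']; exact Set.Icc_subset_Icc hδpos.le le_rfl)
    have hsplit : (∫ s in (0:ℝ)..r, h s) = (∫ s in (0:ℝ)..δ, h s) + ∫ s in δ..r, h s :=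
      (intervalIntegral.integral_add_adjacent_intervals hi1 hi2).symm
    have hlow : δ/2 ≤ ∫ s in (0:ℝ)..δ, h s := by
      have := intervalIntegral.integral_mono_on hδpos.le (intervalIntegrable_const (c := (1/2 : ℝ))) hi1 hδhalf
      simp at this; linarith
    have hnn : 0 ≤ ∫ s in δ..r, h s :=
      intervalIntegral.integral_nonneg hδr (fun u _ => Complex.normSq_nonneg _)
    rw [hsplit]
    have : 0 < δ/2 := by linarith
    linarith
  have hid := krein_normSq_identity hK lam hr'
  have hnormPs : Complex.normSq (Ps r lam) = ‖Ps r lam‖ ^ 2 := by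
    rw [Complex.normSq_eq_norm_sq]
  have hnormP : Complex.normSq (P r lam) = ‖P r lam‖ ^ 2 := by
    rw [Complex.normSq_eq_norm_sq]
  refine ⟨?_, ?_, ?_⟩
  · intro him
    have : Complex.normSq (Ps r lam) = Complex.normSq (P r lam) := by
      have := hid; rw [him] at this; simpa using sub_eq_zero.mp (by linarith [this])
    rw [hnormPs, hnormP] at this
    exact le_antisymm (le_of_pow_le_pow_left₀ (by norm_num) (norm_nonneg _) this.le)
      (le_of_pow_le_pow_left₀ (by norm_num) (norm_nonneg _) this.ge)
  · intro him
    have : Complex.normSq (P r lam) < Complex.normSq (Ps r lam) := by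
      nlinarith [hid, mul_pos him hpos]
    rw [hnormPs, hnormP] at this
    exact lt_of_pow_lt_pow_left₀ 2 (norm_nonneg _) this
  · intro him
    have : Complex.normSq (Ps r lam) < Complex.normSq (P r lam) := by
      nlinarith [hid, mul_pos (neg_pos.mpr him) hpos]
    rw [hnormPs, hnormP] at this
    exact lt_of_pow_lt_pow_left₀ 2 (norm_nonneg _) this
end
end

section
/- Let a ∈ L¹_loc([0,∞); ℂ) and let P, P_* be the solutions of the Krein system with coefficient a. Then for every r ≥ 0 and every λ ∈ ℂ with Im(λ) ≥ 0 one has P_*(r, λ) ≠ 0; that is, P_*(r, ·) has no zeros in the closed upper half-plane. -/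
open MeasureTheory Filter

noncomputable section


-- Fubini triangle swap
lemma tri_swap {F G : ℝ → ℂ} {r : ℝ} (hr : 0 ≤ r)
    (hF : IntegrableOn F (Set.Ioc 0 r)) (hG : IntegrableOn G (Set.Ioc 0 r)) :
    (∫ s in Set.Ioc (0:ℝ) r, (∫ t in Set.Ioc (0:ℝ) s, F t) * G s)
      = ∫ t in Set.Ioc (0:ℝ) r, F t * (∫ s in Set.Ioc t r, G s) := by
  set μ := (volume : Measure ℝ).restrict (Set.Ioc (0:ℝ) r) with hμ
  have hmeas : MeasurableSet {p : ℝ × ℝ | p.2 ≤ p.1} :=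
    measurableSet_le measurable_snd measurable_fst
  have hint : Integrable (fun p : ℝ × ℝ => if p.2 ≤ p.1 then F p.2 * G p.1 else 0)
      (μ.prod μ) := by
    have hbase : Integrable (fun p : ℝ × ℝ => G p.1 * F p.2) (μ.prod μ) :=
      Integrable.mul_prod hG hF
    have h2 : Integrable (fun p : ℝ × ℝ => F p.2 * G p.1) (μ.prod μ) := by
      simpa [mul_comm] using hbase
    have := h2.indicator hmeas
    exact this.congr (Eventually.of_forall fun p => by simp [Set.indicator_apply])
  have swap := MeasureTheory.integral_integral_swap (μ := μ) (ν := μ)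
      (f := fun s t => if t ≤ s then F t * G s else 0) hint
  -- LHS equals the double integral
  have hL : (∫ s in Set.Ioc (0:ℝ) r, (∫ t in Set.Ioc (0:ℝ) s, F t) * G s)
      = ∫ s, (∫ t, (if t ≤ s then F t * G s else 0) ∂μ) ∂μ := by
    refine setIntegral_congr_fun measurableSet_Ioc (fun s hs => ?_)
    have h1 : (∫ t in Set.Ioc (0:ℝ) s, F t) * G s
        = ∫ t in Set.Ioc (0:ℝ) s, F t * G s := by
      rw [← integral_mul_const]
    have h2 : ∫ t, (if t ≤ s then F t * G s else 0) ∂μ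
        = ∫ t in Set.Ioc (0:ℝ) r ∩ Set.Iic s, F t * G s := by
      rw [hμ, ← setIntegral_indicator (measurableSet_Iic (a := s))]
      simp [Set.indicator_apply, Set.mem_Iic]
    have h3 : Set.Ioc (0:ℝ) r ∩ Set.Iic s = Set.Ioc 0 s := by
      rw [Set.Ioc_inter_Iic, min_eq_right hs.2]
    rw [h1, h2, h3]
  -- RHS equals the swapped double integral
  have hR : (∫ t in Set.Ioc (0:ℝ) r, F t * (∫ s in Set.Ioc t r, G s))
      = ∫ t, (∫ s, (if t ≤ s then F t * G s else 0) ∂μ) ∂μ := by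
    refine (setIntegral_congr_fun measurableSet_Ioc (fun t ht => ?_)).symm
    have h2 : ∫ s, (if t ≤ s then F t * G s else 0) ∂μ
        = ∫ s in Set.Ioc (0:ℝ) r ∩ Set.Ici t, F t * G s := by
      rw [hμ, ← setIntegral_indicator (measurableSet_Ici (a := t))]
      simp [Set.indicator_apply, Set.mem_Ici]
    have h3 : Set.Ioc (0:ℝ) r ∩ Set.Ici t = Set.Icc t r := by
      ext x
      simp only [Set.mem_inter_iff, Set.mem_Ioc, Set.mem_Ici, Set.mem_Icc]
      constructor
      · rintro ⟨⟨_, h1⟩, h2⟩; exact ⟨h2, h1⟩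
      · rintro ⟨h1, h2⟩; exact ⟨⟨lt_of_lt_of_le ht.1 h1, h2⟩, h1⟩
    have h4 : (∫ s in Set.Icc t r, F t * G s) = ∫ s in Set.Ioc t r, F t * G s :=
      integral_Icc_eq_integral_Ioc
    rw [h2, h3, h4, ← integral_const_mul]
  rw [hL, hR]
  exact swap

variable {r : ℝ}

lemma prim_contOn {E : Type*} [NormedAddCommGroup E] [NormedSpace ℝ E] {F : ℝ → E} (hF : IntegrableOn F (Set.Ioc 0 r)) :
    ContinuousOn (fun s => ∫ t in Set.Ioc (0:ℝ) s, F t) (Set.Icc 0 r) := by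
  apply intervalIntegral.continuousOn_primitive
  rwa [integrableOn_Icc_iff_integrableOn_Ioc]

lemma prim_aesm {F : ℝ → ℂ} (hF : IntegrableOn F (Set.Ioc 0 r)) :
    AEStronglyMeasurable (fun s => ∫ t in Set.Ioc (0:ℝ) s, F t)
      ((volume : Measure ℝ).restrict (Set.Ioc 0 r)) := by
  refine ContinuousOn.aestronglyMeasurable ?_ measurableSet_Ioc
  exact (prim_contOn hF).mono Set.Ioc_subset_Icc_self

lemma prim_bound {F : ℝ → ℂ} (hF : IntegrableOn F (Set.Ioc 0 r)) :
    ∀ᵐ s ∂((volume : Measure ℝ).restrict (Set.Ioc 0 r)),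
      ‖∫ t in Set.Ioc (0:ℝ) s, F t‖ ≤ ∫ t in Set.Ioc (0:ℝ) r, ‖F t‖ := by
  refine (ae_restrict_iff' measurableSet_Ioc).2 (Eventually.of_forall fun s hs => ?_)
  refine (norm_integral_le_integral_norm _).trans ?_
  apply setIntegral_mono_set hF.norm
  · exact Eventually.of_forall fun t => norm_nonneg _
  · exact HasSubset.Subset.eventuallyLE (Set.Ioc_subset_Ioc le_rfl hs.2)

lemma integrable_mul_prim {F G : ℝ → ℂ} (hF : IntegrableOn F (Set.Ioc 0 r))
    (hG : IntegrableOn G (Set.Ioc 0 r)) :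
    IntegrableOn (fun s => F s * (∫ t in Set.Ioc (0:ℝ) s, G t)) (Set.Ioc 0 r) := by
  have := Integrable.bdd_mul (f := fun s => ∫ t in Set.Ioc (0:ℝ) s, G t)
    (g := F) hF (prim_aesm hG) (prim_bound hG)
  simpa [mul_comm, IntegrableOn] using this

lemma prim_mul_integrable {F G : ℝ → ℂ} (hF : IntegrableOn F (Set.Ioc 0 r))
    (hG : IntegrableOn G (Set.Ioc 0 r)) :
    IntegrableOn (fun s => (∫ t in Set.Ioc (0:ℝ) s, F t) * G s) (Set.Ioc 0 r) :=
  Integrable.bdd_mul hG (prim_aesm hF) (prim_bound hF)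

-- the product of two primitives
lemma integral_prod_integral {F G : ℝ → ℂ} (hr : 0 ≤ r)
    (hF : IntegrableOn F (Set.Ioc 0 r)) (hG : IntegrableOn G (Set.Ioc 0 r)) :
    (∫ t in Set.Ioc (0:ℝ) r, F t) * (∫ t in Set.Ioc (0:ℝ) r, G t)
      = ∫ s in Set.Ioc (0:ℝ) r,
          (F s * (∫ t in Set.Ioc (0:ℝ) s, G t) + (∫ t in Set.Ioc (0:ℝ) s, F t) * G s) := by
  have tri : (∫ s in Set.Ioc (0:ℝ) r, (∫ t in Set.Ioc (0:ℝ) s, F t) * G s)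
      = ∫ t in Set.Ioc (0:ℝ) r, F t * (∫ s in Set.Ioc t r, G s) := tri_swap hr hF hG
  have split : ∀ t ∈ Set.Ioc (0:ℝ) r,
      (∫ s in Set.Ioc t r, G s)
        = (∫ s in Set.Ioc (0:ℝ) r, G s) - ∫ s in Set.Ioc (0:ℝ) t, G s := by
    intro t ht
    have hu : Set.Ioc (0:ℝ) t ∪ Set.Ioc t r = Set.Ioc 0 r :=
      Set.Ioc_union_Ioc_eq_Ioc ht.1.le ht.2
    have hdisj : Disjoint (Set.Ioc (0:ℝ) t) (Set.Ioc t r) := Set.Ioc_disjoint_Ioc_of_le le_rfl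
    have := setIntegral_union hdisj measurableSet_Ioc
      (hG.mono_set (by rw [← hu]; exact Set.subset_union_left))
      (hG.mono_set (by rw [← hu]; exact Set.subset_union_right))
    rw [hu] at this
    rw [this]; ring
  rw [integral_add (integrable_mul_prim hF hG) (prim_mul_integrable hF hG), tri]
  have : (∫ t in Set.Ioc (0:ℝ) r, F t * (∫ s in Set.Ioc t r, G s))
      = ∫ t in Set.Ioc (0:ℝ) r,
          (F t * (∫ s in Set.Ioc (0:ℝ) r, G s) - F t * (∫ s in Set.Ioc (0:ℝ) t, G s)) := by
    refine setIntegral_congr_fun measurableSet_Ioc (fun t ht => ?_)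
    rw [split t ht]; ring
  rw [this, integral_sub (hF.mul_const _) (integrable_mul_prim hF hG),
    integral_mul_const]
  ring

lemma integral_cpx_ofReal {f : ℝ → ℝ} {μ : MeasureTheory.Measure ℝ} :
    ∫ x, ((f x : ℝ) : ℂ) ∂μ = ((∫ x, f x ∂μ : ℝ) : ℂ) := integral_ofReal
lemma prod_rule {F G f g : ℝ → ℂ} {c d : ℂ} {r : ℝ} (hr : 0 ≤ r)
    (hF : IntegrableOn F (Set.Ioc 0 r)) (hG : IntegrableOn G (Set.Ioc 0 r))
    (hf : ∀ s ∈ Set.Icc (0:ℝ) r, f s = c + ∫ t in Set.Ioc (0:ℝ) s, F t)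
    (hg : ∀ s ∈ Set.Icc (0:ℝ) r, g s = d + ∫ t in Set.Ioc (0:ℝ) s, G t) :
    f r * g r = c * d + ∫ s in Set.Ioc (0:ℝ) r, (F s * g s + f s * G s) := by
  have h1 : ∫ s in Set.Ioc (0:ℝ) r, (F s * g s + f s * G s)
      = ∫ s in Set.Ioc (0:ℝ) r,
          ((F s * d + c * G s) +
            (F s * (∫ t in Set.Ioc (0:ℝ) s, G t) + (∫ t in Set.Ioc (0:ℝ) s, F t) * G s)) := by
    refine setIntegral_congr_fun measurableSet_Ioc (fun s hs => ?_)
    rw [hf s (Set.Ioc_subset_Icc_self hs), hg s (Set.Ioc_subset_Icc_self hs)]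
    ring
  have hAB : IntegrableOn (fun s => F s * d + c * G s) (Set.Ioc 0 r) :=
    (hF.mul_const d).add (hG.const_mul c)
  have hCc : IntegrableOn (fun s =>
      F s * (∫ t in Set.Ioc (0:ℝ) s, G t) + (∫ t in Set.Ioc (0:ℝ) s, F t) * G s)
      (Set.Ioc 0 r) := (integrable_mul_prim hF hG).add (prim_mul_integrable hF hG)
  rw [h1, integral_add hAB hCc, integral_add (hF.mul_const d) (hG.const_mul c),
    ← integral_prod_integral hr hF hG, integral_mul_const, integral_const_mul,
    hf r ⟨hr, le_rfl⟩, hg r ⟨hr, le_rfl⟩]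
  ring
lemma integrableOn_conj {f : ℝ → ℂ} {s : Set ℝ} (hf : IntegrableOn f s) :
    IntegrableOn (fun x => (starRingEnd ℂ) (f x)) s := by
  refine ⟨RCLike.continuous_conj.comp_aestronglyMeasurable hf.1, ?_⟩
  simpa [MeasureTheory.hasFiniteIntegral_iff_norm] using hf.2

-- integrable * (continuous on Icc) is integrable on Ioc
lemma mul_contOn_integrableOn {𝕜 : Type*} [RCLike 𝕜] {h w : ℝ → 𝕜} {c b : ℝ}
    (hh : IntegrableOn h (Set.Ioc c b)) (hw : ContinuousOn w (Set.Icc c b)) :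
    IntegrableOn (fun s => h s * w s) (Set.Ioc c b) := by
  obtain ⟨C, hC⟩ := IsCompact.exists_bound_of_continuousOn isCompact_Icc hw
  have hm : AEStronglyMeasurable w ((volume : Measure ℝ).restrict (Set.Ioc c b)) :=
    (hw.mono Set.Ioc_subset_Icc_self).aestronglyMeasurable measurableSet_Ioc
  have hb : ∀ᵐ x ∂((volume : Measure ℝ).restrict (Set.Ioc c b)), ‖w x‖ ≤ C :=
    (ae_restrict_iff' measurableSet_Ioc).2
      (Filter.Eventually.of_forall fun x hx => hC x (Set.Ioc_subset_Icc_self hx))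
  have := Integrable.bdd_mul (f := w) (g := h) hh hm hb
  simpa [mul_comm, IntegrableOn] using this

lemma integral_Ioc_diff {E : Type*} [NormedAddCommGroup E] [NormedSpace ℝ E]
    {h : ℝ → E} {x y R : ℝ} (hh : IntegrableOn h (Set.Ioc 0 R))
    (h0 : 0 ≤ x) (hxy : x ≤ y) (hyR : y ≤ R) :
    ∫ t in Set.Ioc x y, h t = (∫ t in Set.Ioc 0 y, h t) - ∫ t in Set.Ioc 0 x, h t := by
  have hu : Set.Ioc (0:ℝ) x ∪ Set.Ioc x y = Set.Ioc 0 y := Set.Ioc_union_Ioc_eq_Ioc h0 hxy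
  have hdisj : Disjoint (Set.Ioc (0:ℝ) x) (Set.Ioc x y) := Set.Ioc_disjoint_Ioc_of_le le_rfl
  have h1 : IntegrableOn h (Set.Ioc 0 x) :=
    hh.mono_set (Set.Ioc_subset_Ioc le_rfl (hxy.trans hyR))
  have h2 : IntegrableOn h (Set.Ioc x y) := by
    refine hh.mono_set (fun t ht => ⟨lt_of_le_of_lt h0 ht.1, ht.2.trans hyR⟩)
  have := setIntegral_union hdisj measurableSet_Ioc h1 h2
  rw [hu] at this
  rw [this]; abel

lemma pointwise_energy (α π κ l : ℂ) :
    (-(α*π))*(starRingEnd ℂ) κ + κ * (starRingEnd ℂ) (-(α*π))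
      - ((Complex.I*l*π - (starRingEnd ℂ) α * κ) * (starRingEnd ℂ) π
          + π * (starRingEnd ℂ) (Complex.I*l*π - (starRingEnd ℂ) α * κ))
      = 2*l.im*(π*(starRingEnd ℂ) π) := by
  simp only [map_mul, map_sub, map_neg, Complex.conj_I, Complex.conj_conj]
  have h := Complex.sub_conj l
  push_cast at h ⊢
  linear_combination (-Complex.I * π * (starRingEnd ℂ) π) * h
    + (-(π * (starRingEnd ℂ) π) * (2*(l.im:ℂ))) * Complex.I_sq

/-- `P_*(r, ·)` has no zeros in the closed upper half-plane. -/
theorem krein_Pstar_ne_zero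
    (a : ℝ → ℂ) (P Ps : ℝ → ℂ → ℂ)
    (hK : IsKreinSystem a P Ps) :
    ∀ r : ℝ, 0 ≤ r → ∀ lam : ℂ, 0 ≤ lam.im → Ps r lam ≠ 0 := by
  obtain ⟨ha_loc, hPc, hPsc, heq⟩ := hK
  intro r₀ hr₀ lam hlam hzero
  set p : ℝ → ℂ := fun s => P s lam with hp_def
  set q : ℝ → ℂ := fun s => Ps s lam with hq_def
  set F : ℝ → ℂ := fun s => Complex.I * lam * p s - (starRingEnd ℂ) (a s) * q s with hF_def
  set G : ℝ → ℂ := fun s => -(a s * p s) with hG_def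
  have ha_int : ∀ {r : ℝ}, 0 ≤ r → IntegrableOn a (Set.Ioc 0 r) := fun {r} _ =>
    (ha_loc.integrableOn_compact_subset
      (fun x hx => hx.1 : Set.Icc (0:ℝ) r ⊆ Set.Ici 0) isCompact_Icc).mono_set
      Set.Ioc_subset_Icc_self
  have hpc : ContinuousOn p (Set.Ici 0) := hPc lam
  have hqc : ContinuousOn q (Set.Ici 0) := hPsc lam
  have hIccIci : ∀ {c b : ℝ}, 0 ≤ c → Set.Icc c b ⊆ Set.Ici (0:ℝ) :=
    fun {c b} hc x hx => Set.mem_Ici.2 (hc.trans hx.1)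
  have hp_eq : ∀ r : ℝ, 0 ≤ r → p r = 1 + ∫ t in Set.Ioc (0:ℝ) r, F t := by
    intro r hr
    have h := (heq lam r hr).1
    rwa [intervalIntegral.integral_of_le hr] at h
  have hq_eq : ∀ r : ℝ, 0 ≤ r → q r = 1 + ∫ t in Set.Ioc (0:ℝ) r, G t := by
    intro r hr
    have h := (heq lam r hr).2
    rw [intervalIntegral.integral_of_le hr] at h
    have h2 : q r = 1 - ∫ t in Set.Ioc (0:ℝ) r, a t * p t := h
    simp only [hG_def]
    rw [integral_neg, ← sub_eq_add_neg]
    exact h2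
  have hF_int : ∀ {r : ℝ}, 0 ≤ r → IntegrableOn F (Set.Ioc 0 r) := by
    intro r hr
    have h1 : IntegrableOn (fun s => Complex.I * lam * p s) (Set.Ioc 0 r) := by
      refine (ContinuousOn.integrableOn_Icc ?_).mono_set Set.Ioc_subset_Icc_self
      exact continuousOn_const.mul (hpc.mono (hIccIci le_rfl))
    have h2 : IntegrableOn (fun s => (starRingEnd ℂ) (a s) * q s) (Set.Ioc 0 r) :=
      mul_contOn_integrableOn (integrableOn_conj (ha_int hr)) (hqc.mono (hIccIci le_rfl))
    exact h1.sub h2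
  have hG_int : ∀ {r : ℝ}, 0 ≤ r → IntegrableOn G (Set.Ioc 0 r) := fun {r} hr =>
    (mul_contOn_integrableOn (ha_int hr) (hpc.mono (hIccIci le_rfl))).neg
  have hq0 : q 0 = 1 := by simpa using hq_eq 0 le_rfl
  have hqr0 : q r₀ = 0 := hzero
  have hsq : ∀ z : ℂ, z * (starRingEnd ℂ) z = ((‖z‖^2 : ℝ) : ℂ) := by
    intro z
    rw [Complex.mul_conj]
    norm_cast
    rw [Complex.normSq_eq_norm_sq]
  -- energy identity
  have energy : ∀ r : ℝ, 0 ≤ r →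
      ‖q r‖^2 - ‖p r‖^2 = 2 * lam.im * ∫ s in Set.Ioc (0:ℝ) r, ‖p s‖^2 := by
    intro r hr
    have hFc : IntegrableOn (fun t => (starRingEnd ℂ) (F t)) (Set.Ioc 0 r) :=
      integrableOn_conj (hF_int hr)
    have hGc : IntegrableOn (fun t => (starRingEnd ℂ) (G t)) (Set.Ioc 0 r) :=
      integrableOn_conj (hG_int hr)
    have hpcont : ContinuousOn p (Set.Icc 0 r) := hpc.mono (hIccIci le_rfl)
    have hqcont : ContinuousOn q (Set.Icc 0 r) := hqc.mono (hIccIci le_rfl)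
    have hpconj : ContinuousOn (fun s => (starRingEnd ℂ) (p s)) (Set.Icc 0 r) :=
      RCLike.continuous_conj.comp_continuousOn hpcont
    have hqconj : ContinuousOn (fun s => (starRingEnd ℂ) (q s)) (Set.Icc 0 r) :=
      RCLike.continuous_conj.comp_continuousOn hqcont
    have hpp := prod_rule (c := 1) (d := 1) (f := p)
      (g := fun s => (starRingEnd ℂ) (p s)) hr (hF_int hr) hFc
      (fun s hs => hp_eq s hs.1)
      (fun s hs => by
        show (starRingEnd ℂ) (p s) = 1 + ∫ t in Set.Ioc (0:ℝ) s, (starRingEnd ℂ) (F t)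
        rw [hp_eq s hs.1, map_add, map_one, integral_conj])
    have hqq := prod_rule (c := 1) (d := 1) (f := q)
      (g := fun s => (starRingEnd ℂ) (q s)) hr (hG_int hr) hGc
      (fun s hs => hq_eq s hs.1)
      (fun s hs => by
        show (starRingEnd ℂ) (q s) = 1 + ∫ t in Set.Ioc (0:ℝ) s, (starRingEnd ℂ) (G t)
        rw [hq_eq s hs.1, map_add, map_one, integral_conj])
    have hiF : IntegrableOn
        (fun s => F s * (starRingEnd ℂ) (p s) + p s * (starRingEnd ℂ) (F s))
        (Set.Ioc 0 r) := by
      refine (mul_contOn_integrableOn (hF_int hr) hpconj).add ?_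
      simpa [mul_comm] using mul_contOn_integrableOn hFc hpcont
    have hiG : IntegrableOn
        (fun s => G s * (starRingEnd ℂ) (q s) + q s * (starRingEnd ℂ) (G s))
        (Set.Ioc 0 r) := by
      refine (mul_contOn_integrableOn (hG_int hr) hqconj).add ?_
      simpa [mul_comm] using mul_contOn_integrableOn hGc hqcont
    have hsub : q r * (starRingEnd ℂ) (q r) - p r * (starRingEnd ℂ) (p r)
        = ∫ s in Set.Ioc (0:ℝ) r, (2*(lam.im:ℂ)) * ((‖p s‖^2 : ℝ) : ℂ) := by
      calc q r * (starRingEnd ℂ) (q r) - p r * (starRingEnd ℂ) (p r)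
          = (∫ s in Set.Ioc (0:ℝ) r,
              (G s * (starRingEnd ℂ) (q s) + q s * (starRingEnd ℂ) (G s)))
            - ∫ s in Set.Ioc (0:ℝ) r,
              (F s * (starRingEnd ℂ) (p s) + p s * (starRingEnd ℂ) (F s)) := by
            rw [hpp, hqq]; ring
        _ = ∫ s in Set.Ioc (0:ℝ) r,
              ((G s * (starRingEnd ℂ) (q s) + q s * (starRingEnd ℂ) (G s))
                - (F s * (starRingEnd ℂ) (p s) + p s * (starRingEnd ℂ) (F s))) :=
            (integral_sub hiG hiF).symm
        _ = ∫ s in Set.Ioc (0:ℝ) r, (2*(lam.im:ℂ)) * ((‖p s‖^2 : ℝ) : ℂ) := by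
            refine setIntegral_congr_fun measurableSet_Ioc (fun s _ => ?_)
            have hpe := pointwise_energy (a s) (p s) (q s) lam
            rw [hF_def, hG_def]
            simp only []
            rw [hpe, hsq (p s)]
    rw [integral_const_mul, integral_cpx_ofReal, hsq (q r), hsq (p r)] at hsub
    exact_mod_cast hsub
  have hpr0 : p r₀ = 0 := by
    have he := energy r₀ hr₀
    have hint_nonneg : 0 ≤ ∫ s in Set.Ioc (0:ℝ) r₀, ‖p s‖^2 :=
      setIntegral_nonneg measurableSet_Ioc (fun s _ => sq_nonneg _)
    rw [hqr0] at he
    simp only [norm_zero] at he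
    have hprod : 0 ≤ 2 * lam.im * ∫ s in Set.Ioc (0:ℝ) r₀, ‖p s‖^2 := by positivity
    have h1 : ‖p r₀‖ = 0 := by nlinarith [norm_nonneg (p r₀), sq_nonneg ‖p r₀‖]
    exact norm_eq_zero.mp h1
  -- Gronwall part
  set u : ℝ → ℝ := fun s => ‖p s‖ + ‖q s‖ with hu_def
  set g : ℝ → ℝ := fun s => 2*(‖lam‖ + ‖a s‖) with hg_def
  have hg_nonneg : ∀ s, 0 ≤ g s := fun s => by positivity
  have hg_int0 : IntegrableOn g (Set.Ioc 0 r₀) := by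
    refine Integrable.const_mul ?_ 2
    exact Integrable.add (integrableOn_const (μ := volume) (s := Set.Ioc (0:ℝ) r₀) measure_Ioc_lt_top.ne) (ha_int hr₀).norm
  have hg_int : ∀ {x y : ℝ}, 0 ≤ x → y ≤ r₀ → IntegrableOn g (Set.Ioc x y) := by
    intro x y hx hy
    exact hg_int0.mono_set (fun t ht => ⟨lt_of_le_of_lt hx ht.1, ht.2.trans hy⟩)
  have hu_cont : ContinuousOn u (Set.Ici 0) := hpc.norm.add hqc.norm
  have hu_nonneg : ∀ s, 0 ≤ u s := fun s => add_nonneg (norm_nonneg _) (norm_nonneg _)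
  have hFG_bound : ∀ s, ‖F s‖ + ‖G s‖ ≤ g s * u s := by
    intro s
    have h1 : ‖F s‖ ≤ ‖lam‖*‖p s‖ + ‖a s‖*‖q s‖ := by
      refine (norm_sub_le _ _).trans ?_
      have e1 : ‖Complex.I * lam * p s‖ = ‖lam‖*‖p s‖ := by
        rw [norm_mul, norm_mul, Complex.norm_I, one_mul]
      have e2 : ‖(starRingEnd ℂ) (a s) * q s‖ = ‖a s‖*‖q s‖ := by
        rw [norm_mul, RCLike.norm_conj]
      rw [e1, e2]
    have h2 : ‖G s‖ = ‖a s‖*‖p s‖ := by rw [norm_neg, norm_mul]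
    have := norm_nonneg (p s)
    have := norm_nonneg (q s)
    have := norm_nonneg (a s)
    have := norm_nonneg lam
    show ‖F s‖ + ‖G s‖ ≤ 2*(‖lam‖ + ‖a s‖) * (‖p s‖ + ‖q s‖)
    nlinarith
  -- step lemma
  have step : ∀ c b : ℝ, 0 ≤ c → c ≤ b → b ≤ r₀ → p b = 0 → q b = 0 →
      (∫ s in Set.Ioc c b, g s) ≤ 1/2 → ∀ x ∈ Set.Icc c b, p x = 0 ∧ q x = 0 := by
    intro c b hc hcb hbr hpb hqb hgsmall
    have hb0 : 0 ≤ b := hc.trans hcb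
    obtain ⟨x₀, hx₀mem, hx₀max⟩ := isCompact_Icc.exists_isMaxOn
      (Set.nonempty_Icc.2 hcb) (hu_cont.mono (hIccIci hc))
    have key : ∀ x ∈ Set.Icc c b, u x ≤ (1/2) * u x₀ := by
      intro x hx
      have hx0 : 0 ≤ x := hc.trans hx.1
      have hFx : IntegrableOn F (Set.Ioc x b) :=
        (hF_int hb0).mono_set (fun t ht => ⟨lt_of_le_of_lt hx0 ht.1, ht.2⟩)
      have hGx : IntegrableOn G (Set.Ioc x b) :=
        (hG_int hb0).mono_set (fun t ht => ⟨lt_of_le_of_lt hx0 ht.1, ht.2⟩)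
      have hpx : p x = - ∫ t in Set.Ioc x b, F t := by
        have e1 := hp_eq b hb0
        have e2 := hp_eq x hx0
        rw [hpb] at e1
        rw [integral_Ioc_diff (hF_int hb0) hx0 hx.2 le_rfl]
        rw [e2]
        linear_combination -e1
      have hqx : q x = - ∫ t in Set.Ioc x b, G t := by
        have e1 := hq_eq b hb0
        have e2 := hq_eq x hx0
        rw [hqb] at e1
        rw [integral_Ioc_diff (hG_int hb0) hx0 hx.2 le_rfl]
        rw [e2]
        linear_combination -e1
      have hgu_int : IntegrableOn (fun t => g t * u t) (Set.Ioc x b) :=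
        mul_contOn_integrableOn (hg_int hx0 hbr) (hu_cont.mono (hIccIci hx0))
      have hub : u x ≤ ∫ t in Set.Ioc x b, g t * u t := by
        have n1 : ‖p x‖ ≤ ∫ t in Set.Ioc x b, ‖F t‖ := by
          rw [hpx, norm_neg]; exact norm_integral_le_integral_norm _
        have n2 : ‖q x‖ ≤ ∫ t in Set.Ioc x b, ‖G t‖ := by
          rw [hqx, norm_neg]; exact norm_integral_le_integral_norm _
        have n3 : (∫ t in Set.Ioc x b, ‖F t‖) + (∫ t in Set.Ioc x b, ‖G t‖)
            = ∫ t in Set.Ioc x b, (‖F t‖ + ‖G t‖) := (integral_add hFx.norm hGx.norm).symm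
        have n4 : (∫ t in Set.Ioc x b, (‖F t‖ + ‖G t‖))
            ≤ ∫ t in Set.Ioc x b, g t * u t := by
          refine setIntegral_mono_on (hFx.norm.add hGx.norm) hgu_int measurableSet_Ioc
            (fun t _ => hFG_bound t)
        calc u x = ‖p x‖ + ‖q x‖ := rfl
          _ ≤ (∫ t in Set.Ioc x b, ‖F t‖) + ∫ t in Set.Ioc x b, ‖G t‖ := add_le_add n1 n2
          _ = ∫ t in Set.Ioc x b, (‖F t‖ + ‖G t‖) := n3
          _ ≤ ∫ t in Set.Ioc x b, g t * u t := n4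
      have hmax : ∀ t ∈ Set.Ioc x b, u t ≤ u x₀ := fun t ht =>
        hx₀max ⟨hx.1.trans ht.1.le, ht.2⟩
      have hub2 : (∫ t in Set.Ioc x b, g t * u t) ≤ ∫ t in Set.Ioc x b, g t * u x₀ := by
        refine setIntegral_mono_on hgu_int ((hg_int hx0 hbr).mul_const _) measurableSet_Ioc
          (fun t ht => mul_le_mul_of_nonneg_left (hmax t ht) (hg_nonneg t))
      have hub3 : (∫ t in Set.Ioc x b, g t * u x₀) = (∫ t in Set.Ioc x b, g t) * u x₀ :=
        integral_mul_const _ _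
      have hub4 : (∫ t in Set.Ioc x b, g t) ≤ ∫ t in Set.Ioc c b, g t := by
        refine setIntegral_mono_set (hg_int hc hbr) ?_ ?_
        · exact Filter.Eventually.of_forall (fun t => hg_nonneg t)
        · exact HasSubset.Subset.eventuallyLE (Set.Ioc_subset_Ioc hx.1 le_rfl)
      have hux₀ : 0 ≤ u x₀ := hu_nonneg x₀
      calc u x ≤ ∫ t in Set.Ioc x b, g t * u t := hub
        _ ≤ (∫ t in Set.Ioc x b, g t) * u x₀ := by rw [← hub3]; exact hub2
        _ ≤ (1/2) * u x₀ := by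
            refine mul_le_mul_of_nonneg_right ?_ hux₀
            exact hub4.trans hgsmall
    have hM0 : u x₀ ≤ 0 := by
      have h : ‖p x₀‖ + ‖q x₀‖ ≤ 1/2 * (‖p x₀‖ + ‖q x₀‖) := key x₀ hx₀mem
      show ‖p x₀‖ + ‖q x₀‖ ≤ 0
      linarith
    intro x hx
    have hux : u x = 0 := le_antisymm ((key x hx).trans (by
      show 1/2 * (‖p x₀‖ + ‖q x₀‖) ≤ 0
      have h0 : ‖p x₀‖ + ‖q x₀‖ ≤ 0 := hM0
      linarith)) (hu_nonneg x)
    have hpq : ‖p x‖ + ‖q x‖ = 0 := hux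
    have h1 : ‖p x‖ = 0 := by linarith [norm_nonneg (p x), norm_nonneg (q x)]
    have h2 : ‖q x‖ = 0 := by linarith [norm_nonneg (p x), norm_nonneg (q x)]
    exact ⟨norm_eq_zero.mp h1, norm_eq_zero.mp h2⟩
  -- uniform continuity gives δ
  have hGgc : ContinuousOn (fun x => ∫ t in Set.Ioc (0:ℝ) x, g t) (Set.Icc 0 r₀) :=
    prim_contOn hg_int0
  have huc := isCompact_Icc.uniformContinuousOn_of_continuous hGgc
  rw [Metric.uniformContinuousOn_iff] at huc
  obtain ⟨δ, hδpos, hδ⟩ := huc (1/2) (by norm_num)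
  have hδ2pos : 0 < δ/2 := by linarith
  have key2 : ∀ s t : ℝ, 0 ≤ s → s ≤ t → t ≤ r₀ → t - s ≤ δ/2 →
      (∫ x in Set.Ioc s t, g x) ≤ 1/2 := by
    intro s t hs hst htr hdiff
    rw [integral_Ioc_diff hg_int0 hs hst htr]
    have hsmem : s ∈ Set.Icc (0:ℝ) r₀ := ⟨hs, hst.trans htr⟩
    have htmem : t ∈ Set.Icc (0:ℝ) r₀ := ⟨hs.trans hst, htr⟩
    have hd : dist t s < δ := by
      rw [Real.dist_eq, abs_of_nonneg (by linarith)]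
      linarith
    have := hδ t htmem s hsmem hd
    rw [Real.dist_eq] at this
    have := le_of_lt (lt_of_le_of_lt (le_abs_self _) this)
    linarith
  have ind : ∀ n : ℕ, p (max (r₀ - n*(δ/2)) 0) = 0 ∧ q (max (r₀ - n*(δ/2)) 0) = 0 := by
    intro n
    induction n with
    | zero =>
      have : max (r₀ - (0:ℕ)*(δ/2)) 0 = r₀ := by
        simp [max_eq_left hr₀]
      rw [this]
      exact ⟨hpr0, hqr0⟩
    | succ n ih =>
      set b := max (r₀ - n*(δ/2)) 0 with hb
      set c := max (r₀ - (n+1:ℕ)*(δ/2)) 0 with hc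
      have hc0 : 0 ≤ c := le_max_right _ _
      have hcb : c ≤ b := by
        apply max_le_max _ le_rfl
        push_cast
        nlinarith
      have hbr : b ≤ r₀ := by
        apply max_le _ hr₀
        nlinarith [n.cast_nonneg (α := ℝ)]
      have hbc : b - c ≤ δ/2 := by
        have h1 : b ≤ c + δ/2 := by
          apply max_le
          · have he : r₀ - n*(δ/2) = (r₀ - (n+1:ℕ)*(δ/2)) + δ/2 := by push_cast; ring
            rw [he]
            exact add_le_add (le_max_left _ _) le_rfl
          · linarith
        linarith
      have hs := step c b hc0 hcb hbr ih.1 ih.2 (key2 c b hc0 hcb hbr hbc)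
      exact hs c ⟨le_rfl, hcb⟩
  obtain ⟨n, hn⟩ := exists_nat_ge (r₀/(δ/2))
  have hle : r₀ - n*(δ/2) ≤ 0 := by
    rw [div_le_iff₀ hδ2pos] at hn
    linarith
  have hmax0 : max (r₀ - n*(δ/2)) 0 = 0 := max_eq_right hle
  have hfin := (ind n).2
  rw [hmax0, hq0] at hfin
  exact one_ne_zero hfin
end
end

section
/- For r > 0 and δ > 0, let H_r(x) = (e^{−irx} − 1)/x. Then ∫_ℝ |H_r(x − δi)|² dx = π (1 − e^{−2rδ})/δ, and in particular ∫_ℝ |H_r(x − δi)|² dx < 2π r. -/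
open MeasureTheory Filter

noncomputable section

section AuxHr
open Set Complex Topology Real FourierTransform

-- copy of working lemmas
lemma exp_int (c : ℂ) (hc : 0 < c.re) :
    IntegrableOn (fun t : ℝ => Complex.exp (-c * (t:ℂ))) (Ioi (0:ℝ)) := by
  have h : IntegrableOn (fun t : ℝ => Real.exp (-c.re * t)) (Ioi (0:ℝ)) :=
    exp_neg_integrableOn_Ioi 0 hc
  have hcont : Continuous fun t : ℝ => Complex.exp (-c * (t:ℂ)) :=
    Complex.continuous_exp.comp (continuous_const.mul Complex.continuous_ofReal)
  refine Integrable.mono' h hcont.aestronglyMeasurable.restrict ?_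
  filter_upwards with t
  rw [Complex.norm_exp]
  simp [Real.norm_of_nonneg (Real.exp_pos _).le]

lemma exp_val (c : ℂ) (hc : 0 < c.re) :
    ∫ t in Ioi (0:ℝ), Complex.exp (-c * (t:ℂ)) = 1 / c := by
  have hc0 : c ≠ 0 := fun h => by simp [h] at hc
  have key : ∀ x : ℝ, HasDerivAt (fun t : ℝ => -Complex.exp (-c * (t:ℂ)) / c)
      (Complex.exp (-c * (x:ℂ))) x := by
    intro x
    have h1 : HasDerivAt (fun t : ℝ => -c * (t:ℂ)) (-c) x := by
      simpa using ((hasDerivAt_id (x:ℝ)).ofReal_comp.const_mul (-c))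
    have h2 := (h1.cexp).neg.div_const c
    convert h2 using 1
    · rfl
    · ext t; simp [neg_div]
    · field_simp
  have hT : Tendsto (fun t : ℝ => -Complex.exp (-c * (t:ℂ)) / c) atTop (𝓝 0) := by
    rw [tendsto_zero_iff_norm_tendsto_zero]
    have heq : (fun t : ℝ => ‖-Complex.exp (-c * (t:ℂ)) / c‖) =
        fun t : ℝ => Real.exp (-(c.re * t)) / ‖c‖ := by
      ext t
      rw [norm_div, norm_neg, Complex.norm_exp]
      simp
    rw [heq]
    have h3 : Tendsto (fun t : ℝ => c.re * t) atTop atTop :=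
      tendsto_id.const_mul_atTop hc
    have := (Real.tendsto_exp_neg_atTop_nhds_zero.comp h3).div_const ‖c‖
    simpa [Function.comp] using this
  have := integral_Ioi_of_hasDerivAt_of_tendsto' (a := 0)
    (fun x _ => key x) (exp_int c hc) hT
  rw [this]
  simp [hc0]
  field_simp

-- two-sided decaying oscillatory integral
section TwoSided
variable (b c : ℝ)

noncomputable def FF (b c : ℝ) (t : ℝ) : ℂ :=
  Complex.exp (-(Complex.I * b) * (t:ℂ)) * (Real.exp (-c * |t|) : ℂ)

lemma FF_Ioi_eq (hc : 0 < c) : ∀ t ∈ Ioi (0:ℝ),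
    FF b c t = Complex.exp (-((c:ℂ) + Complex.I * b) * (t:ℂ)) := by
  intro t ht
  rw [FF, abs_of_pos ht, Complex.ofReal_exp, ← Complex.exp_add]
  congr 1
  push_cast
  ring

lemma FF_neg_Ioi_eq (hc : 0 < c) : ∀ t ∈ Ioi (0:ℝ),
    FF b c (-t) = Complex.exp (-((c:ℂ) - Complex.I * b) * (t:ℂ)) := by
  intro t ht
  rw [FF, abs_neg, abs_of_pos ht, Complex.ofReal_exp, ← Complex.exp_add]
  congr 1
  push_cast
  ring

lemma FF_int_Ioi (hc : 0 < c) : IntegrableOn (FF b c) (Ioi (0:ℝ)) := by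
  refine ((exp_int ((c:ℂ) + Complex.I * b) (by simp [hc])).congr_fun ?_ measurableSet_Ioi)
  intro t ht; exact (FF_Ioi_eq b c hc t ht).symm

lemma FF_int_Iic (hc : 0 < c) : IntegrableOn (FF b c) (Iic (0:ℝ)) := by
  rw [show (volume : Measure ℝ) = Measure.map (fun x : ℝ => -x) volume from
    (Measure.map_neg_eq_self _).symm]
  have m : MeasurableEmbedding fun x : ℝ => -x := (Homeomorph.neg ℝ).measurableEmbedding
  rw [m.integrableOn_map_iff]
  have : (fun x : ℝ => -x) ⁻¹' (Iic 0) = Ici 0 := by ext x; simp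
  rw [Function.comp_def, this]
  rw [integrableOn_Ici_iff_integrableOn_Ioi]
  refine ((exp_int ((c:ℂ) - Complex.I * b) (by simp [hc])).congr_fun ?_ measurableSet_Ioi)
  intro t ht; exact (FF_neg_Ioi_eq b c hc t ht).symm

lemma FF_integrable (hc : 0 < c) : Integrable (FF b c) := by
  have := (FF_int_Iic b c hc).union (FF_int_Ioi b c hc)
  rwa [Iic_union_Ioi, integrableOn_univ] at this

lemma FF_integral (hc : 0 < c) :
    ∫ t : ℝ, FF b c t = 2 * c / (c^2 + b^2) := by
  have hsplit : ∫ t : ℝ, FF b c t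
      = (∫ t in Iic (0:ℝ), FF b c t) + ∫ t in Ioi (0:ℝ), FF b c t := by
    rw [← setIntegral_union (Iic_disjoint_Ioi le_rfl) measurableSet_Ioi
      (FF_int_Iic b c hc) (FF_int_Ioi b c hc), Iic_union_Ioi, Measure.restrict_univ]
  have h1 : ∫ t in Ioi (0:ℝ), FF b c t = 1 / ((c:ℂ) + Complex.I * b) := by
    rw [setIntegral_congr_fun measurableSet_Ioi (FF_Ioi_eq b c hc)]
    exact exp_val _ (by simp [hc])
  have h2 : ∫ t in Iic (0:ℝ), FF b c t = 1 / ((c:ℂ) - Complex.I * b) := by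
    have := integral_comp_neg_Iic (0:ℝ) (fun x => FF b c (-x))
    simp only [neg_neg, neg_zero] at this
    rw [this, setIntegral_congr_fun measurableSet_Ioi (FF_neg_Ioi_eq b c hc)]
    exact exp_val _ (by simp [hc])
  rw [hsplit, h1, h2]
  have hb1 : ((c:ℂ) + Complex.I * b) ≠ 0 := by
    intro h
    have := congrArg Complex.re h
    simp at this
    exact hc.ne' this
  have hb2 : ((c:ℂ) - Complex.I * b) ≠ 0 := by
    intro h
    have := congrArg Complex.re h
    simp at this
    exact hc.ne' this
  have hden : ((c:ℂ)^2 + (b:ℂ)^2) = ((c:ℂ) - Complex.I * b) * ((c:ℂ) + Complex.I * b) := by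
    ring_nf
    rw [Complex.I_sq]
    ring
  push_cast
  rw [hden]
  field_simp
  ring

end TwoSided

open FourierTransform

lemma cauchy_integrable (c : ℝ) (hc : 0 < c) :
    Integrable fun x : ℝ => (c^2 + x^2)⁻¹ := by
  have h0 := (integrable_inv_one_add_sq.comp_mul_left' (R := c⁻¹)
    (inv_ne_zero hc.ne')).const_mul (c^2)⁻¹
  have heq : (fun x : ℝ => (c^2)⁻¹ * (1 + (c⁻¹ * x)^2)⁻¹) = fun x : ℝ => (c^2 + x^2)⁻¹ := by
    ext x
    rw [← mul_inv]
    congr 1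
    field_simp
  rwa [heq] at h0

-- the Fourier transform of t ↦ exp (-c |t|)
lemma fourier_exp_abs (c : ℝ) (hc : 0 < c) (w : ℝ) :
    𝓕 (fun t : ℝ => ((Real.exp (-c * |t|)) : ℂ)) w
      = ((2 * c / (c^2 + (2 * π * w)^2) : ℝ) : ℂ) := by
  rw [Real.fourier_real_eq_integral_exp_smul]
  have heq : ∀ v : ℝ, Complex.exp (↑(-2 * π * v * w) * Complex.I) •
      ((Real.exp (-c * |v|)) : ℂ) = FF (2 * π * w) c v := by
    intro v
    rw [FF, smul_eq_mul]
    congr 2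
    push_cast
    ring
  simp_rw [heq]
  rw [FF_integral _ c hc]
  push_cast
  ring

lemma exp_abs_integrable (c : ℝ) (hc : 0 < c) :
    Integrable fun t : ℝ => ((Real.exp (-c * |t|)) : ℂ) := by
  have := FF_integrable 0 c hc
  refine this.congr ?_
  filter_upwards with t
  rw [FF]
  push_cast
  simp

lemma fourier_exp_abs_integrable (c : ℝ) (hc : 0 < c) :
    Integrable (𝓕 (fun t : ℝ => ((Real.exp (-c * |t|)) : ℂ))) := by
  have h1 : Integrable fun w : ℝ => ((2 * c / (c^2 + (2 * π * w)^2) : ℝ) : ℂ) := by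
    refine Integrable.ofReal ?_
    have h2 := ((cauchy_integrable c hc).comp_mul_left'
      (R := 2 * π) (by positivity)).const_mul (2 * c)
    refine h2.congr ?_
    filter_upwards with w
    show _ = 2 * c / (c ^ 2 + (2 * π * w) ^ 2)
    rw [div_eq_mul_inv]
  refine h1.congr ?_
  filter_upwards with w
  rw [fourier_exp_abs c hc w]

-- the Cauchy kernel oscillatory integral
lemma cauchy_exp_integral (r d : ℝ) (hr : 0 ≤ r) (hd : 0 < d) :
    ∫ x : ℝ, Complex.exp (Complex.I * r * x) * ((d^2 + x^2)⁻¹ : ℝ)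
      = (π / d * Real.exp (-d * r) : ℝ) := by
  set c := 2 * π * d with hc_def
  have hc : 0 < c := by positivity
  set f : ℝ → ℂ := fun t => ((Real.exp (-c * |t|)) : ℂ) with hf_def
  have hcont : Continuous f := by fun_prop
  have hinv := (exp_abs_integrable c hc).fourierInv_fourier_eq
    (fourier_exp_abs_integrable c hc) (hcont.continuousAt (x := r / (2 * π)))
  rw [Real.fourierInv_eq'] at hinv
  simp only [RCLike.inner_apply, conj_trivial, smul_eq_mul] at hinv
  simp_rw [fourier_exp_abs c hc] at hinv
  simp_rw [mul_comm (r / (2 * π))] at hinv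
  have key : ∀ x : ℝ, Complex.exp (Complex.I * r * x) * ((d^2 + x^2)⁻¹ : ℝ)
      = ((π / d : ℝ) : ℂ) * (Complex.exp (↑(2 * π * (x * (r / (2 * π)))) * Complex.I) *
        ((2 * c / (c^2 + (2 * π * x)^2) : ℝ) : ℂ)) := by
    intro x
    have h2 : (2:ℝ) * π * (x * (r / (2 * π))) = r * x := by
      field_simp
    rw [h2]
    have h3 : Complex.exp (Complex.I * r * x) = Complex.exp (↑(r * x) * Complex.I) := by
      congr 1; push_cast; ring
    rw [h3]
    have h4r : 2 * c / (c^2 + (2 * π * x)^2) = (d / π) * (d^2 + x^2)⁻¹ := by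
      rw [hc_def]
      have hden : (0:ℝ) < d^2 + x^2 := by positivity
      have hπ : (π:ℝ) ≠ 0 := Real.pi_ne_zero
      field_simp
    rw [h4r, Complex.ofReal_mul (d / π) ((d^2 + x^2)⁻¹)]
    have h5 : ((π / d : ℝ) : ℂ) * ((d / π : ℝ) : ℂ) = 1 := by
      rw [← Complex.ofReal_mul, ← Complex.ofReal_one]
      congr 1
      field_simp
    calc Complex.exp (↑(r * x) * Complex.I) * (((d^2 + x^2)⁻¹ : ℝ) : ℂ)
        = (((π / d : ℝ) : ℂ) * ((d / π : ℝ) : ℂ)) *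
          (Complex.exp (↑(r * x) * Complex.I) * (((d^2 + x^2)⁻¹ : ℝ) : ℂ)) := by
          rw [h5, one_mul]
      _ = _ := by ring
  simp_rw [key]
  rw [integral_const_mul ((π / d : ℝ) : ℂ), hinv]
  have habs : |r / (2 * π)| = r / (2 * π) := abs_of_nonneg (by positivity)
  have hcr : -c * |r / (2 * π)| = -d * r := by
    rw [habs, hc_def]; field_simp
  rw [hcr]
  push_cast
  ring

lemma cauchy_exp_complex_integrable (r d : ℝ) (hd : 0 < d) :
    Integrable fun x : ℝ => Complex.exp (Complex.I * r * x) * (((d^2 + x^2)⁻¹ : ℝ) : ℂ) := by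
  have hcont : Continuous fun x : ℝ =>
      Complex.exp (Complex.I * r * x) * (((d^2 + x^2)⁻¹ : ℝ) : ℂ) := by
    have hne : ∀ x : ℝ, d^2 + x^2 ≠ 0 := fun x => by positivity
    fun_prop (disch := intros; positivity)
  refine (cauchy_integrable d hd).mono' hcont.aestronglyMeasurable ?_
  filter_upwards with x
  rw [norm_mul, Complex.norm_exp]
  have : (Complex.I * r * x).re = 0 := by simp
  rw [this, Real.exp_zero, one_mul, Complex.norm_real]
  have h1 : (0:ℝ) < d^2 + x^2 := by positivity
  rw [Real.norm_of_nonneg (by positivity)]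

lemma cos_integral (r d : ℝ) (hr : 0 ≤ r) (hd : 0 < d) :
    ∫ x : ℝ, Real.cos (r * x) * (d^2 + x^2)⁻¹ = π / d * Real.exp (-d * r) := by
  have h := cauchy_exp_integral r d hr hd
  have hint := cauchy_exp_complex_integrable r d hd
  have hre := integral_re hint
  rw [h] at hre
  simp only [RCLike.re_to_complex, Complex.ofReal_re] at hre
  rw [← hre]
  congr 1
  ext x
  have h1 : Complex.I * r * x = ((r * x : ℝ) : ℂ) * Complex.I := by push_cast; ring
  rw [h1]
  simp only [Complex.mul_re, Complex.ofReal_re, Complex.ofReal_im,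
    Complex.exp_ofReal_mul_I_re, Complex.exp_ofReal_mul_I_im, mul_zero, sub_zero]

lemma cauchy_integral (d : ℝ) (hd : 0 < d) :
    ∫ x : ℝ, (d^2 + x^2)⁻¹ = π / d := by
  have := cos_integral 0 d le_rfl hd
  simpa using this

/-- For `H_r(x) = (e^{-irx} - 1)/x` and `δ > 0`,
`∫_ℝ |H_r(x - δi)|² dx = π (1 - e^{-2rδ})/δ < 2π r`. -/
theorem Hr_integral
    (r δ : ℝ) (hr : 0 < r) (hδ : 0 < δ) :
    (∫ x : ℝ, ‖(Complex.exp (-Complex.I * r * ((x : ℂ) - δ * Complex.I)) - 1) /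
        ((x : ℂ) - δ * Complex.I)‖ ^ 2)
      = Real.pi * (1 - Real.exp (-2 * r * δ)) / δ ∧
    (∫ x : ℝ, ‖(Complex.exp (-Complex.I * r * ((x : ℂ) - δ * Complex.I)) - 1) /
        ((x : ℂ) - δ * Complex.I)‖ ^ 2)
      < 2 * Real.pi * r := by
  set a := Real.exp (-δ * r) with ha_def
  have ha_pos : 0 < a := Real.exp_pos _
  have hpt : ∀ x : ℝ,
      ‖(Complex.exp (-Complex.I * r * ((x : ℂ) - δ * Complex.I)) - 1) /
        ((x : ℂ) - δ * Complex.I)‖ ^ 2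
      = (1 + a^2) * (δ^2 + x^2)⁻¹ - (2*a) * (Real.cos (r*x) * (δ^2 + x^2)⁻¹) := by
    intro x
    have hzsq : Complex.normSq ((x : ℂ) - δ * Complex.I) = δ^2 + x^2 := by
      simp [Complex.normSq_apply, Complex.sub_re, Complex.sub_im, Complex.mul_re,
        Complex.mul_im, Complex.I_re, Complex.I_im, Complex.ofReal_re, Complex.ofReal_im]
      try ring
    have hexp : Complex.exp (-Complex.I * r * ((x : ℂ) - δ * Complex.I))
        = (a : ℂ) * Complex.exp (((-(r*x) : ℝ) : ℂ) * Complex.I) := by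
      have harg : -Complex.I * r * ((x : ℂ) - δ * Complex.I)
          = ((-δ * r : ℝ) : ℂ) + ((-(r*x) : ℝ) : ℂ) * Complex.I := by
        push_cast
        linear_combination ((r : ℂ) * δ) * Complex.I_sq
      rw [harg, Complex.exp_add, ha_def, Complex.ofReal_exp]
      try push_cast
      try ring
    have hnsq : Complex.normSq ((a : ℂ) * Complex.exp (((-(r*x) : ℝ) : ℂ) * Complex.I) - 1)
        = 1 + a^2 - 2*a*Real.cos (r*x) := by
      simp only [Complex.normSq_apply, Complex.sub_re, Complex.sub_im, Complex.mul_re,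
        Complex.mul_im, Complex.exp_ofReal_mul_I_re, Complex.exp_ofReal_mul_I_im,
        Complex.ofReal_re, Complex.ofReal_im, Complex.one_re, Complex.one_im,
        Real.cos_neg, Real.sin_neg]
      linear_combination (a:ℝ)^2 * Real.sin_sq_add_cos_sq (r*x)
    rw [hexp, norm_div, div_pow,
      Complex.sq_norm, Complex.sq_norm, hzsq, hnsq]
    have hden : (0:ℝ) < δ^2 + x^2 := by positivity
    field_simp
    try ring
  have hint1 : Integrable fun x : ℝ => (δ^2 + x^2)⁻¹ := cauchy_integrable δ hδ
  have hint2 : Integrable fun x : ℝ => Real.cos (r*x) * (δ^2 + x^2)⁻¹ := by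
    refine hint1.mono' ?_ ?_
    · have : Continuous fun x : ℝ => Real.cos (r*x) * (δ^2 + x^2)⁻¹ := by
        fun_prop (disch := intros; positivity)
      exact this.aestronglyMeasurable
    · filter_upwards with x
      have hden : (0:ℝ) < δ^2 + x^2 := by positivity
      rw [Real.norm_eq_abs, abs_mul, abs_of_pos (inv_pos.mpr hden)]
      calc |Real.cos (r*x)| * (δ^2+x^2)⁻¹ ≤ 1 * (δ^2+x^2)⁻¹ := by
            gcongr
            exact Real.abs_cos_le_one _
        _ = (δ^2+x^2)⁻¹ := one_mul _
  have hval : (∫ x : ℝ, ‖(Complex.exp (-Complex.I * r * ((x : ℂ) - δ * Complex.I)) - 1) /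
        ((x : ℂ) - δ * Complex.I)‖ ^ 2) = Real.pi * (1 - Real.exp (-2 * r * δ)) / δ := by
    simp_rw [hpt]
    rw [integral_sub (hint1.const_mul _) (hint2.const_mul _), integral_const_mul,
      integral_const_mul, cauchy_integral δ hδ, cos_integral r δ hr.le hδ, ← ha_def]
    have ha2 : Real.exp (-2*r*δ) = a^2 := by
      rw [ha_def, sq, ← Real.exp_add]
      congr 1
      ring
    rw [ha2]
    field_simp
    ring
  refine ⟨hval, ?_⟩
  rw [hval]
  have hlt : 1 - Real.exp (-2 * r * δ) < 2 * r * δ := by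
    have h0 : -(2 * r * δ) ≠ 0 := by
      have : (0:ℝ) < 2 * r * δ := by positivity
      linarith
    have := Real.add_one_lt_exp h0
    have heq : Real.exp (-(2 * r * δ)) = Real.exp (-2 * r * δ) := by ring_nf
    linarith [heq ▸ this]
  calc Real.pi * (1 - Real.exp (-2 * r * δ)) / δ
      < Real.pi * (2 * r * δ) / δ := by
        have hπ := Real.pi_pos
        gcongr
    _ = 2 * Real.pi * r := by field_simp

end AuxHr
end
end

section
/- Let a ∈ L¹_loc([0,∞); ℂ) and let P, P_* be the solutions of the Krein system with coefficient a. For λ ∈ ℂ define φ(r, λ) = (e^{−iλr}/2)(P(2r, λ) + P_*(2r, λ)) and ψ(r, λ) = (e^{−iλr}/(2i))(P(2r, λ) − P_*(2r, λ)), and set p(r) = −2 Re a(2r), q(r) = 2 Im a(2r). Then φ(0,λ) = 1, ψ(0,λ) = 0, and the pair f = (φ, ψ) is locally absolutely continuous in r and satisfies the Dirac equation J f′(r) + Q(r) f(r) = λ f(r) for almost every r ≥ 0, where J = [[0, 1], [−1, 0]] and Q = [[−q, p], [p, q]]. -/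
open MeasureTheory Filter

noncomputable section

private lemma exp_hasDerivAt (μ : ℂ) (s : ℝ) :
    HasDerivAt (fun x : ℝ => Complex.exp (μ * x)) (μ * Complex.exp (μ * s)) s := by
  have h1 : HasDerivAt (fun x : ℝ => μ * (x : ℂ)) μ s := by
    simpa using (Complex.ofRealCLM.hasDerivAt (x := s)).const_mul μ
  simpa [mul_comm] using h1.cexp

private lemma integral_exp_mul (μ : ℂ) (a b : ℝ) :
    ∫ s in a..b, μ * Complex.exp (μ * s) = Complex.exp (μ * b) - Complex.exp (μ * a) := by
  refine intervalIntegral.integral_eq_sub_of_hasDerivAt (fun s _ => exp_hasDerivAt μ s) ?_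
  apply Continuous.intervalIntegrable
  exact continuous_const.mul (Complex.continuous_exp.comp (continuous_const.mul Complex.continuous_ofReal))

private lemma fubini_triangle (μ : ℂ) {t : ℝ} (ht : 0 ≤ t) {f : ℝ → ℂ}
    (hf : IntegrableOn f (Set.Ioc 0 t)) :
    ∫ s in Set.Ioc (0:ℝ) t, (μ * Complex.exp (μ * s)) * ∫ r in Set.Ioc (0:ℝ) s, f r
      = ∫ r in Set.Ioc (0:ℝ) t, (Complex.exp (μ * t) - Complex.exp (μ * r)) * f r := by
  set g : ℝ × ℝ → ℂ := fun p => (μ * Complex.exp (μ * p.1)) * f p.2 with hg_def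
  set S : Set (ℝ × ℝ) := {p | p.2 ≤ p.1} with hS_def
  have hS : MeasurableSet S := (isClosed_le continuous_snd continuous_fst).measurableSet
  set ν := volume.restrict (Set.Ioc (0:ℝ) t) with hν_def
  have hcont : Continuous fun s : ℝ => μ * Complex.exp (μ * s) :=
    continuous_const.mul (Complex.continuous_exp.comp (continuous_const.mul Complex.continuous_ofReal))
  have hgint : Integrable g (ν.prod ν) :=
    Integrable.mul_prod (hcont.integrableOn_Ioc) hf
  have hH : Integrable (S.indicator g) (ν.prod ν) := hgint.indicator hS
  have step1 : ∀ s ∈ Set.Ioc (0:ℝ) t,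
      (∫ r, S.indicator g (s, r) ∂ν)
        = (μ * Complex.exp (μ * s)) * ∫ r in Set.Ioc (0:ℝ) s, f r := by
    intro s hs
    have h1 : ∀ r : ℝ, S.indicator g (s, r)
        = (Set.Iic s).indicator (fun r => (μ * Complex.exp (μ * s)) * f r) r := by
      intro r
      simp [hS_def, hg_def, Set.indicator_apply, Set.mem_Iic]
    simp_rw [h1]
    rw [hν_def, integral_indicator measurableSet_Iic, Measure.restrict_restrict measurableSet_Iic]
    have h2 : Set.Iic s ∩ Set.Ioc (0:ℝ) t = Set.Ioc 0 s := by
      ext x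
      simp only [Set.mem_inter_iff, Set.mem_Iic, Set.mem_Ioc]
      constructor
      · rintro ⟨h1, h2, h3⟩; exact ⟨h2, h1⟩
      · rintro ⟨h1, h2⟩; exact ⟨h2, h1, le_trans h2 hs.2⟩
    rw [h2, integral_const_mul]
  have step2 : ∀ r ∈ Set.Ioc (0:ℝ) t,
      (∫ s, S.indicator g (s, r) ∂ν)
        = (Complex.exp (μ * t) - Complex.exp (μ * r)) * f r := by
    intro r hr
    have h1 : ∀ s : ℝ, S.indicator g (s, r)
        = (Set.Ici r).indicator (fun s => (μ * Complex.exp (μ * s)) * f r) s := by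
      intro s
      simp [hS_def, hg_def, Set.indicator_apply, Set.mem_Ici]
    simp_rw [h1]
    rw [hν_def, integral_indicator measurableSet_Ici, Measure.restrict_restrict measurableSet_Ici]
    have h2 : Set.Ici r ∩ Set.Ioc (0:ℝ) t = Set.Icc r t := by
      ext x
      simp only [Set.mem_inter_iff, Set.mem_Ici, Set.mem_Ioc, Set.mem_Icc]
      constructor
      · rintro ⟨h1, h2, h3⟩; exact ⟨h1, h3⟩
      · rintro ⟨h1, h2⟩; exact ⟨h1, hr.1.trans_le h1, h2⟩
    rw [h2, integral_Icc_eq_integral_Ioc, ← intervalIntegral.integral_of_le hr.2,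
      intervalIntegral.integral_mul_const, integral_exp_mul]
  calc ∫ s in Set.Ioc (0:ℝ) t, (μ * Complex.exp (μ * s)) * ∫ r in Set.Ioc (0:ℝ) s, f r
      = ∫ s, (∫ r, S.indicator g (s, r) ∂ν) ∂ν := (setIntegral_congr_fun measurableSet_Ioc step1).symm
    _ = ∫ r, (∫ s, S.indicator g (s, r) ∂ν) ∂ν := integral_integral_swap hH
    _ = ∫ r in Set.Ioc (0:ℝ) t, (Complex.exp (μ * t) - Complex.exp (μ * r)) * f r :=
        setIntegral_congr_fun measurableSet_Ioc step2

private lemma key (μ c : ℂ) {t : ℝ} (ht : 0 ≤ t) {f : ℝ → ℂ}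
    (hf : IntervalIntegrable f volume 0 t) :
    Complex.exp (μ * t) * (c + ∫ s in (0:ℝ)..t, f s)
      = c + ∫ s in (0:ℝ)..t,
          (μ * Complex.exp (μ * s) * (c + ∫ r in (0:ℝ)..s, f r) + Complex.exp (μ * s) * f s) := by
  have hcont : Continuous fun s : ℝ => μ * Complex.exp (μ * s) :=
    continuous_const.mul (Complex.continuous_exp.comp (continuous_const.mul Complex.continuous_ofReal))
  have hconte : Continuous fun s : ℝ => Complex.exp (μ * s) :=
    Complex.continuous_exp.comp (continuous_const.mul Complex.continuous_ofReal)
  have hprim : ContinuousOn (fun s => c + ∫ r in (0:ℝ)..s, f r) (Set.uIcc 0 t) :=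
    continuousOn_const.add (intervalIntegral.continuousOn_primitive_interval
      ((intervalIntegrable_iff' enorm_ne_top).mp hf))
  have h1 : IntervalIntegrable (fun s => μ * Complex.exp (μ * s) * (c + ∫ r in (0:ℝ)..s, f r))
      volume 0 t := (hcont.continuousOn.mul hprim).intervalIntegrable
  have h2 : IntervalIntegrable (fun s => Complex.exp (μ * s) * f s) volume 0 t := by
    simpa [mul_comm] using hf.mul_continuousOn hconte.continuousOn
  rw [intervalIntegral.integral_add h1 h2]
  have h3 : ∀ s : ℝ, μ * Complex.exp (μ * s) * (c + ∫ r in (0:ℝ)..s, f r)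
      = μ * Complex.exp (μ * s) * c + μ * Complex.exp (μ * s) * (∫ r in (0:ℝ)..s, f r) := by
    intro s; ring
  simp_rw [h3]
  have hc1 : IntervalIntegrable (fun s => μ * Complex.exp (μ * s) * c) volume 0 t :=
    (hcont.mul continuous_const).intervalIntegrable 0 t
  have hc2 : IntervalIntegrable
      (fun s => μ * Complex.exp (μ * s) * (∫ r in (0:ℝ)..s, f r)) volume 0 t := by
    have := h1.sub hc1
    simpa [h3, add_sub_cancel_left] using this
  rw [intervalIntegral.integral_add hc1 hc2, intervalIntegral.integral_mul_const, integral_exp_mul]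
  have h4 : (∫ s in (0:ℝ)..t, μ * Complex.exp (μ * s) * (∫ r in (0:ℝ)..s, f r))
      = Complex.exp (μ * t) * (∫ s in (0:ℝ)..t, f s) - ∫ s in (0:ℝ)..t, Complex.exp (μ * s) * f s := by
    rw [intervalIntegral.integral_of_le ht]
    have h5 : Set.EqOn (fun s : ℝ => μ * Complex.exp (μ * s) * (∫ r in (0:ℝ)..s, f r))
        (fun s : ℝ => μ * Complex.exp (μ * s) * (∫ r in Set.Ioc (0:ℝ) s, f r)) (Set.Ioc 0 t) := by
      intro s hs
      simp only
      rw [intervalIntegral.integral_of_le hs.1.le]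
    rw [setIntegral_congr_fun measurableSet_Ioc h5, fubini_triangle μ ht hf.1]
    have h6 : ∀ r : ℝ, (Complex.exp (μ * t) - Complex.exp (μ * r)) * f r
        = Complex.exp (μ * t) * f r - Complex.exp (μ * r) * f r := fun r => by ring
    simp_rw [h6]
    rw [integral_sub (hf.1.const_mul _) h2.1, integral_const_mul,
      ← intervalIntegral.integral_of_le ht, ← intervalIntegral.integral_of_le ht]
  rw [h4]
  simp [Complex.exp_zero]
  ring

/-- The transformation of a Krein system into a Dirac system: with
`φ(r,λ) = e^{-iλr}/2 (P(2r,λ) + P_*(2r,λ))`, `ψ(r,λ) = e^{-iλr}/(2i) (P(2r,λ) - P_*(2r,λ))`,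
`p(r) = -2 Re a(2r)`, `q(r) = 2 Im a(2r)`, the pair `f = (φ, ψ)` satisfies `φ(0) = 1`,
`ψ(0) = 0` and the Dirac equation `J f′ + Q f = λ f` (in integral form, equivalent to
local absolute continuity plus the equation a.e.): componentwise
`φ′ = p φ + q ψ - λ ψ`, `ψ′ = λ φ + q φ - p ψ`. -/
theorem krein_to_dirac
    (a : ℝ → ℂ) (P Ps : ℝ → ℂ → ℂ)
    (hK : IsKreinSystem a P Ps)
    (lam : ℂ) (φ ψ : ℝ → ℂ) (p q : ℝ → ℝ)
    (hφ : ∀ r : ℝ, φ r =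
      Complex.exp (-Complex.I * lam * r) / 2 * (P (2 * r) lam + Ps (2 * r) lam))
    (hψ : ∀ r : ℝ, ψ r =
      Complex.exp (-Complex.I * lam * r) / (2 * Complex.I) * (P (2 * r) lam - Ps (2 * r) lam))
    (hp : ∀ r : ℝ, p r = -2 * (a (2 * r)).re)
    (hq : ∀ r : ℝ, q r = 2 * (a (2 * r)).im) :
    φ 0 = 1 ∧ ψ 0 = 0 ∧
    ∀ t : ℝ, 0 ≤ t →
      (φ t = 1 + ∫ s in (0:ℝ)..t,
        ((p s : ℂ) * φ s + (q s : ℂ) * ψ s - lam * ψ s)) ∧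
      (ψ t = ∫ s in (0:ℝ)..t,
        (lam * φ s + (q s : ℂ) * φ s - (p s : ℂ) * ψ s)) := by
  obtain ⟨ha, hPc, hPsc, heq⟩ := hK
  have hP0 : P 0 lam = 1 := by simpa using (heq lam 0 le_rfl).1
  have hPs0 : Ps 0 lam = 1 := by simpa using (heq lam 0 le_rfl).2
  have hre : ∀ s : ℝ, (((a (2*s)).re : ℝ) : ℂ) = (a (2*s) + (starRingEnd ℂ) (a (2*s))) / 2 :=
    fun s => by
      have h := Complex.add_conj (a (2*s))
      push_cast at h
      linear_combination -h / 2
  have him : ∀ s : ℝ, (((a (2*s)).im : ℝ) : ℂ)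
      = (a (2*s) - (starRingEnd ℂ) (a (2*s))) * (-Complex.I) / 2 := fun s => by
    have h := Complex.sub_conj (a (2*s))
    push_cast at h
    linear_combination (Complex.I/2) * h + ((a (2*s)).im : ℂ) * Complex.I_sq
  refine ⟨?_, ?_, ?_⟩
  · rw [hφ 0]
    norm_num [hP0, hPs0]
  · rw [hψ 0]
    norm_num [hP0, hPs0]
  intro t ht
  have huIcc : Set.uIcc (0:ℝ) t = Set.Icc 0 t := Set.uIcc_of_le ht
  have h2t : (0:ℝ) ≤ 2 * t := by linarith
  -- integrability of s ↦ a (2s) on [0, t]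
  have haInt : IntervalIntegrable (fun s => a (2*s)) volume 0 t := by
    have h1 : IntegrableOn a (Set.Icc 0 (2*t)) volume :=
      ha.integrableOn_compact_subset Set.Icc_subset_Ici_self isCompact_Icc
    have h2 : IntervalIntegrable a volume 0 (2*t) := by
      apply IntegrableOn.intervalIntegrable
      rwa [Set.uIcc_of_le h2t]
    have h3 := h2.comp_mul_left (c := 2)
    norm_num at h3
    exact h3
  have hconjInt : IntervalIntegrable (fun s => (starRingEnd ℂ) (a (2*s))) volume 0 t := by
    have h1 := Complex.conjCLE.toContinuousLinearMap.integrable_comp haInt.1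
    have h2 := Complex.conjCLE.toContinuousLinearMap.integrable_comp haInt.2
    exact ⟨h1, h2⟩
  have hAc : ContinuousOn (fun s : ℝ => P (2*s) lam) (Set.Icc 0 t) := by
    apply (hPc lam).comp ((continuous_const.mul continuous_id).continuousOn)
    intro x hx
    exact Set.mem_Ici.mpr (mul_nonneg (by norm_num) hx.1)
  have hBc : ContinuousOn (fun s : ℝ => Ps (2*s) lam) (Set.Icc 0 t) := by
    apply (hPsc lam).comp ((continuous_const.mul continuous_id).continuousOn)
    intro x hx
    exact Set.mem_Ici.mpr (mul_nonneg (by norm_num) hx.1)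
  have t1 : IntervalIntegrable (fun s => Complex.I * lam * P (2*s) lam) volume 0 t :=
    ContinuousOn.intervalIntegrable (by rw [huIcc]; exact continuousOn_const.mul hAc)
  have t2 : IntervalIntegrable (fun s => (starRingEnd ℂ) (a (2*s)) * Ps (2*s) lam) volume 0 t :=
    hconjInt.mul_continuousOn (by rw [huIcc]; exact hBc)
  have t3 : IntervalIntegrable (fun s => a (2*s) * P (2*s) lam) volume 0 t :=
    haInt.mul_continuousOn (by rw [huIcc]; exact hAc)
  have hsub : ∀ (k : ℝ → ℂ) (s : ℝ), (∫ r in (0:ℝ)..2*s, k r) = ∫ r in (0:ℝ)..s, 2 * k (2*r) := by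
    intro k s
    rw [intervalIntegral.integral_const_mul, intervalIntegral.integral_comp_mul_left k two_ne_zero]
    norm_num
    ring
  have hAint : ∀ s : ℝ, 0 ≤ s → P (2*s) lam = 1 + ∫ r in (0:ℝ)..s,
      2 * (Complex.I * lam * P (2*r) lam - (starRingEnd ℂ) (a (2*r)) * Ps (2*r) lam) := by
    intro s hs
    have h := (heq lam (2*s) (by linarith)).1
    rw [h, hsub]
  have hBint : ∀ s : ℝ, 0 ≤ s → Ps (2*s) lam = 1 + ∫ r in (0:ℝ)..s,
      -(2 * (a (2*r) * P (2*r) lam)) := by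
    intro s hs
    have h := (heq lam (2*s) (by linarith)).2
    rw [h, hsub, intervalIntegral.integral_neg, sub_eq_add_neg]
  set gphi : ℝ → ℂ := fun r => Complex.I * lam * P (2*r) lam
    - (starRingEnd ℂ) (a (2*r)) * Ps (2*r) lam - a (2*r) * P (2*r) lam with hgphi
  set gpsi : ℝ → ℂ := fun r => -Complex.I * (Complex.I * lam * P (2*r) lam
    - (starRingEnd ℂ) (a (2*r)) * Ps (2*r) lam + a (2*r) * P (2*r) lam) with hgpsi
  have hgphiInt : IntervalIntegrable gphi volume 0 t := (t1.sub t2).sub t3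
  have hgpsiInt : IntervalIntegrable gpsi volume 0 t := ((t1.sub t2).add t3).const_mul (-Complex.I)
  have hFphi : ∀ s : ℝ, 0 ≤ s → s ≤ t →
      (1 + ∫ r in (0:ℝ)..s, gphi r) = (P (2*s) lam + Ps (2*s) lam) / 2 := by
    intro s hs0 hst
    have hmono : Set.uIcc (0:ℝ) s ⊆ Set.uIcc (0:ℝ) t := by
      rw [huIcc, Set.uIcc_of_le hs0]
      exact Set.Icc_subset_Icc le_rfl hst
    have hfA := ((t1.sub t2).const_mul 2).mono_set hmono
    have hfB : IntervalIntegrable (fun r : ℝ => -(2 * (a (2*r) * P (2*r) lam))) volume 0 s :=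
      ((t3.const_mul 2).neg).mono_set hmono
    have hadd : (∫ r in (0:ℝ)..s,
          2 * (Complex.I * lam * P (2*r) lam - (starRingEnd ℂ) (a (2*r)) * Ps (2*r) lam))
        + (∫ r in (0:ℝ)..s, -(2 * (a (2*r) * P (2*r) lam)))
        = 2 * ∫ r in (0:ℝ)..s, gphi r := by
      rw [← intervalIntegral.integral_add hfA hfB, ← intervalIntegral.integral_const_mul]
      refine intervalIntegral.integral_congr fun r _ => ?_
      simp only [hgphi]
      ring
    rw [hAint s hs0, hBint s hs0]
    linear_combination -hadd / 2
  have hFpsi : ∀ s : ℝ, 0 ≤ s → s ≤ t →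
      (∫ r in (0:ℝ)..s, gpsi r) = (P (2*s) lam - Ps (2*s) lam) / (2 * Complex.I) := by
    intro s hs0 hst
    have hmono : Set.uIcc (0:ℝ) s ⊆ Set.uIcc (0:ℝ) t := by
      rw [huIcc, Set.uIcc_of_le hs0]
      exact Set.Icc_subset_Icc le_rfl hst
    have hfA := ((t1.sub t2).const_mul 2).mono_set hmono
    have hfB : IntervalIntegrable (fun r : ℝ => -(2 * (a (2*r) * P (2*r) lam))) volume 0 s :=
      ((t3.const_mul 2).neg).mono_set hmono
    have hsub2 : (∫ r in (0:ℝ)..s,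
          2 * (Complex.I * lam * P (2*r) lam - (starRingEnd ℂ) (a (2*r)) * Ps (2*r) lam))
        - (∫ r in (0:ℝ)..s, -(2 * (a (2*r) * P (2*r) lam)))
        = (2 * Complex.I) * ∫ r in (0:ℝ)..s, gpsi r := by
      rw [← intervalIntegral.integral_sub hfA hfB, ← intervalIntegral.integral_const_mul]
      refine intervalIntegral.integral_congr fun r _ => ?_
      simp only [hgpsi]
      linear_combination (2 * (Complex.I * lam * P (2*r) lam
        - (starRingEnd ℂ) (a (2*r)) * Ps (2*r) lam + a (2*r) * P (2*r) lam)) * Complex.I_sq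
    rw [hAint s hs0, hBint s hs0, eq_div_iff (by simp [Complex.I_ne_zero] : (2:ℂ) * Complex.I ≠ 0)]
    linear_combination -hsub2
  have keyφ := key (-Complex.I * lam) 1 ht hgphiInt
  have keyψ := key (-Complex.I * lam) 0 ht hgpsiInt
  constructor
  · have e1 : φ t = Complex.exp (-Complex.I * lam * t) * (1 + ∫ r in (0:ℝ)..t, gphi r) := by
      rw [hφ t, hFphi t ht le_rfl]
      ring
    rw [e1, keyφ]
    congr 1
    refine intervalIntegral.integral_congr fun s hs => ?_
    rw [huIcc] at hs
    rw [hFphi s hs.1 hs.2, hφ s, hψ s, hp s, hq s]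
    push_cast
    rw [hre s, him s]
    simp only [div_eq_mul_inv, mul_inv, Complex.inv_I, hgphi]
    linear_combination (Complex.exp (-Complex.I*lam*s) * (a (2*s) * (Ps (2*s) lam - P (2*s) lam)
      + (starRingEnd ℂ) (a (2*s)) * (P (2*s) lam - Ps (2*s) lam)) / 2) * Complex.I_sq
  · have e1 : ψ t = Complex.exp (-Complex.I * lam * t) * (0 + ∫ r in (0:ℝ)..t, gpsi r) := by
      rw [hψ t, hFpsi t ht le_rfl]
      ring
    rw [e1, keyψ, zero_add]
    refine intervalIntegral.integral_congr fun s hs => ?_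
    rw [huIcc] at hs
    rw [hFpsi s hs.1 hs.2, hφ s, hψ s, hp s, hq s]
    push_cast
    rw [hre s, him s]
    simp only [div_eq_mul_inv, mul_inv, Complex.inv_I, hgpsi]
    linear_combination (-(Complex.exp (-Complex.I*lam*s)) * lam
      * (P (2*s) lam + Ps (2*s) lam) / 2) * Complex.I_sq
end
end

section
/- Let a ∈ L¹_loc([0,∞); ℂ) be real-valued and let P, P_* be the solutions of the Krein system with coefficient a. Then for every r ≥ 0 the value P_*(r, i) is a real number and P_*(r, i) > 0. -/
open MeasureTheory Filter
open Topology

noncomputable section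

lemma krein_parts_aux (f g : ℝ → ℝ) (r : ℝ) (hr : 0 ≤ r)
    (hf : IntegrableOn f (Set.Icc 0 r)) (hg : IntegrableOn g (Set.Icc 0 r)) :
    (∫ s in (0:ℝ)..r, f s * ∫ t in (0:ℝ)..s, g t)
      + (∫ s in (0:ℝ)..r, g s * ∫ t in (0:ℝ)..s, f t)
      = (∫ s in (0:ℝ)..r, f s) * ∫ s in (0:ℝ)..r, g s := by
  have hfI : IntervalIntegrable f volume 0 r := by
    rw [intervalIntegrable_iff_integrableOn_Icc_of_le hr]; exact hf
  have hgI : IntervalIntegrable g volume 0 r := by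
    rw [intervalIntegrable_iff_integrableOn_Icc_of_le hr]; exact hg
  set μ := volume.restrict (Set.Ioc (0:ℝ) r) with hμ
  have hf' : Integrable f μ := hf.mono_set Set.Ioc_subset_Icc_self
  have hg' : Integrable g μ := hg.mono_set Set.Ioc_subset_Icc_self
  set H : ℝ × ℝ → ℝ :=
    fun p => Set.indicator {q : ℝ × ℝ | q.2 ≤ q.1} (fun q => f q.1 * g q.2) p with hH
  have hmeas : MeasurableSet {q : ℝ × ℝ | q.2 ≤ q.1} :=
    measurableSet_le measurable_snd measurable_fst
  have hHint : Integrable H (μ.prod μ) := (hf'.mul_prod hg').indicator hmeas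
  have hswap : (∫ s, ∫ t, H (s, t) ∂μ ∂μ) = ∫ t, ∫ s, H (s, t) ∂μ ∂μ :=
    integral_integral_swap (by exact hHint)
  have hL : ∀ s ∈ Set.Ioc (0:ℝ) r,
      (∫ t, H (s, t) ∂μ) = f s * ∫ t in (0:ℝ)..s, g t := by
    intro s hs
    have h1 : (fun t => H (s, t)) = Set.indicator (Set.Iic s) (fun t => f s * g t) := by
      funext t
      simp only [hH, Set.indicator_apply, Set.mem_setOf_eq, Set.mem_Iic]
    rw [h1, integral_indicator measurableSet_Iic, hμ,
      Measure.restrict_restrict measurableSet_Iic]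
    have h2 : Set.Iic s ∩ Set.Ioc 0 r = Set.Ioc 0 s := by
      ext t
      simp only [Set.mem_inter_iff, Set.mem_Iic, Set.mem_Ioc]
      exact ⟨fun ⟨h, h0, _⟩ => ⟨h0, h⟩, fun ⟨h0, h⟩ => ⟨h, h0, h.trans hs.2⟩⟩
    rw [h2, intervalIntegral.integral_of_le hs.1.le, integral_const_mul]
  have hR : ∀ t ∈ Set.Ioc (0:ℝ) r,
      (∫ s, H (s, t) ∂μ)
        = g t * ((∫ s in (0:ℝ)..r, f s) - ∫ s in (0:ℝ)..t, f s) := by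
    intro t ht
    have hft : IntervalIntegrable f volume 0 t := by
      refine hfI.mono_set ?_
      rw [Set.uIcc_of_le ht.1.le, Set.uIcc_of_le hr]
      exact Set.Icc_subset_Icc le_rfl ht.2
    have h1 : (fun s => H (s, t)) = Set.indicator (Set.Ici t) (fun s => f s * g t) := by
      funext s
      simp only [hH, Set.indicator_apply, Set.mem_setOf_eq, Set.mem_Ici]
    rw [h1, integral_indicator measurableSet_Ici, hμ,
      Measure.restrict_restrict measurableSet_Ici]
    have h2 : Set.Ici t ∩ Set.Ioc 0 r = Set.Icc t r := by
      ext s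
      simp only [Set.mem_inter_iff, Set.mem_Ici, Set.mem_Ioc, Set.mem_Icc]
      exact ⟨fun ⟨h, _, h1'⟩ => ⟨h, h1'⟩, fun ⟨h, h1'⟩ => ⟨h, ht.1.trans_le h, h1'⟩⟩
    rw [h2, integral_Icc_eq_integral_Ioc, ← intervalIntegral.integral_of_le ht.2,
      intervalIntegral.integral_mul_const,
      ← intervalIntegral.integral_interval_sub_left hfI hft, mul_comm]
  -- continuity and boundedness of the primitive of f
  have hFcont : ContinuousOn (fun s => ∫ t in (0:ℝ)..s, f t) (Set.Icc 0 r) := by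
    refine (intervalIntegral.continuousOn_primitive hf).congr fun s hs => ?_
    rw [intervalIntegral.integral_of_le hs.1]
  obtain ⟨C, hC⟩ := isCompact_Icc.exists_bound_of_continuousOn hFcont
  have hgF : IntervalIntegrable (fun s => g s * ∫ t in (0:ℝ)..s, f t) volume 0 r := by
    rw [intervalIntegrable_iff_integrableOn_Icc_of_le hr]
    have hb : ∀ᵐ x ∂(volume.restrict (Set.Icc (0:ℝ) r)),
        ‖∫ t in (0:ℝ)..x, f t‖ ≤ C :=
      (ae_restrict_iff' measurableSet_Icc).2 (Eventually.of_forall fun x hx => hC x hx)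
    have := Integrable.bdd_mul (c := C) hg
      (hFcont.aestronglyMeasurable measurableSet_Icc) hb
    simpa [mul_comm, IntegrableOn] using this
  have e1 : (∫ s in (0:ℝ)..r, f s * ∫ t in (0:ℝ)..s, g t)
      = ∫ s, ∫ t, H (s, t) ∂μ ∂μ := by
    rw [intervalIntegral.integral_of_le hr]
    exact setIntegral_congr_fun measurableSet_Ioc fun s hs => (hL s hs).symm
  have e2 : (∫ t, ∫ s, H (s, t) ∂μ ∂μ)
      = ∫ t in (0:ℝ)..r, g t * ((∫ s in (0:ℝ)..r, f s) - ∫ s in (0:ℝ)..t, f s) := by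
    rw [intervalIntegral.integral_of_le hr]
    exact setIntegral_congr_fun measurableSet_Ioc fun t ht => hR t ht
  have e3 : (∫ t in (0:ℝ)..r, g t * ((∫ s in (0:ℝ)..r, f s) - ∫ s in (0:ℝ)..t, f s))
      = (∫ s in (0:ℝ)..r, g s) * (∫ s in (0:ℝ)..r, f s)
        - ∫ s in (0:ℝ)..r, g s * ∫ t in (0:ℝ)..s, f t := by
    have : (fun t => g t * ((∫ s in (0:ℝ)..r, f s) - ∫ s in (0:ℝ)..t, f s))
        = fun t => g t * (∫ s in (0:ℝ)..r, f s) - g t * ∫ s in (0:ℝ)..t, f s := by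
      funext t; ring
    rw [this, intervalIntegral.integral_sub (hgI.mul_const _) hgF,
      intervalIntegral.integral_mul_const]


  have := e1.trans (hswap.trans (e2.trans e3))
  linarith [this]

lemma krein_primitive_mul (f g x y : ℝ → ℝ) (c d : ℝ) (r : ℝ) (hr : 0 ≤ r)
    (hf : IntegrableOn f (Set.Icc 0 r)) (hg : IntegrableOn g (Set.Icc 0 r))
    (hx : ∀ s ∈ Set.Icc (0:ℝ) r, x s = c + ∫ t in (0:ℝ)..s, f t)
    (hy : ∀ s ∈ Set.Icc (0:ℝ) r, y s = d + ∫ t in (0:ℝ)..s, g t)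
    (hparts : (∫ s in (0:ℝ)..r, f s * ∫ t in (0:ℝ)..s, g t)
      + (∫ s in (0:ℝ)..r, g s * ∫ t in (0:ℝ)..s, f t)
      = (∫ s in (0:ℝ)..r, f s) * ∫ s in (0:ℝ)..r, g s) :
    x r * y r = c * d + ∫ s in (0:ℝ)..r, (x s * g s + y s * f s) := by
  have hfI : IntervalIntegrable f volume 0 r := by
    rw [intervalIntegrable_iff_integrableOn_Icc_of_le hr]; exact hf
  have hgI : IntervalIntegrable g volume 0 r := by
    rw [intervalIntegrable_iff_integrableOn_Icc_of_le hr]; exact hg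
  have hFcont : ContinuousOn (fun s => ∫ t in (0:ℝ)..s, f t) (Set.Icc 0 r) := by
    refine (intervalIntegral.continuousOn_primitive hf).congr fun s hs => ?_
    rw [intervalIntegral.integral_of_le hs.1]
  have hGcont : ContinuousOn (fun s => ∫ t in (0:ℝ)..s, g t) (Set.Icc 0 r) := by
    refine (intervalIntegral.continuousOn_primitive hg).congr fun s hs => ?_
    rw [intervalIntegral.integral_of_le hs.1]
  obtain ⟨C, hC⟩ := isCompact_Icc.exists_bound_of_continuousOn hFcont
  obtain ⟨D, hD⟩ := isCompact_Icc.exists_bound_of_continuousOn hGcont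
  have hgF : IntervalIntegrable (fun s => g s * ∫ t in (0:ℝ)..s, f t) volume 0 r := by
    rw [intervalIntegrable_iff_integrableOn_Icc_of_le hr]
    have hb : ∀ᵐ x ∂(volume.restrict (Set.Icc (0:ℝ) r)),
        ‖∫ t in (0:ℝ)..x, f t‖ ≤ C :=
      (ae_restrict_iff' measurableSet_Icc).2 (Eventually.of_forall fun x hx => hC x hx)
    have := Integrable.bdd_mul (c := C) hg
      (hFcont.aestronglyMeasurable measurableSet_Icc) hb
    simpa [mul_comm, IntegrableOn] using this
  have hfG : IntervalIntegrable (fun s => f s * ∫ t in (0:ℝ)..s, g t) volume 0 r := by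
    rw [intervalIntegrable_iff_integrableOn_Icc_of_le hr]
    have hb : ∀ᵐ x ∂(volume.restrict (Set.Icc (0:ℝ) r)),
        ‖∫ t in (0:ℝ)..x, g t‖ ≤ D :=
      (ae_restrict_iff' measurableSet_Icc).2 (Eventually.of_forall fun x hx => hD x hx)
    have := Integrable.bdd_mul (c := D) hf
      (hGcont.aestronglyMeasurable measurableSet_Icc) hb
    simpa [mul_comm, IntegrableOn] using this
  have hcongr : ∫ s in (0:ℝ)..r, (x s * g s + y s * f s)
      = ∫ s in (0:ℝ)..r, ((c + ∫ t in (0:ℝ)..s, f t) * g s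
          + (d + ∫ t in (0:ℝ)..s, g t) * f s) := by
    refine intervalIntegral.integral_congr fun s hs => ?_
    rw [Set.uIcc_of_le hr] at hs
    rw [hx s hs, hy s hs]
  have hsplit : ∫ s in (0:ℝ)..r, ((c + ∫ t in (0:ℝ)..s, f t) * g s
          + (d + ∫ t in (0:ℝ)..s, g t) * f s)
      = c * (∫ s in (0:ℝ)..r, g s) + d * (∫ s in (0:ℝ)..r, f s)
        + ((∫ s in (0:ℝ)..r, g s * ∫ t in (0:ℝ)..s, f t)
          + (∫ s in (0:ℝ)..r, f s * ∫ t in (0:ℝ)..s, g t)) := by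
    have heq : (fun s => (c + ∫ t in (0:ℝ)..s, f t) * g s
          + (d + ∫ t in (0:ℝ)..s, g t) * f s)
        = fun s => (c * g s + d * f s)
            + ((g s * ∫ t in (0:ℝ)..s, f t) + (f s * ∫ t in (0:ℝ)..s, g t)) := by
      funext s; ring
    rw [heq, intervalIntegral.integral_add ((hgI.const_mul c).add (hfI.const_mul d))
        (hgF.add hfG),
      intervalIntegral.integral_add (hgI.const_mul c) (hfI.const_mul d),
      intervalIntegral.integral_add hgF hfG,
      intervalIntegral.integral_const_mul, intervalIntegral.integral_const_mul]
  have hxr := hx r ⟨hr, le_rfl⟩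
  have hyr := hy r ⟨hr, le_rfl⟩
  rw [hcongr, hsplit, hxr, hyr]
  ring_nf
  linarith [hparts]

lemma krein_gronwall_zero (k φ : ℝ → ℝ) (R : ℝ) (hR : 0 ≤ R)
    (hk : IntegrableOn k (Set.Icc 0 R)) (hk0 : ∀ s, 0 ≤ k s)
    (hφ : ContinuousOn φ (Set.Icc 0 R))
    (hkφ : IntegrableOn (fun s => k s * φ s) (Set.Icc 0 R))
    (hineq : ∀ r ∈ Set.Icc (0:ℝ) R, φ r ≤ ∫ s in (0:ℝ)..r, k s * φ s) :
    ∀ r ∈ Set.Icc (0:ℝ) R, φ r ≤ 0 := by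
  have hkI : IntervalIntegrable k volume 0 R := by
    rw [intervalIntegrable_iff_integrableOn_Icc_of_le hR]; exact hk
  have hkφI : IntervalIntegrable (fun s => k s * φ s) volume 0 R := by
    rw [intervalIntegrable_iff_integrableOn_Icc_of_le hR]; exact hkφ
  have hsub : ∀ {u v : ℝ}, 0 ≤ u → v ≤ R → u ≤ v →
      Set.uIcc u v ⊆ Set.uIcc (0:ℝ) R := by
    intro u v hu hv huv
    rw [Set.uIcc_of_le (huv), Set.uIcc_of_le hR]
    exact Set.Icc_subset_Icc hu hv
  have hφ0 : φ 0 ≤ 0 := by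
    have := hineq 0 ⟨le_rfl, hR⟩
    simpa using this
  set S : Set ℝ := {t ∈ Set.Icc (0:ℝ) R | ∀ s ∈ Set.Icc (0:ℝ) t, φ s ≤ 0} with hS
  have h0S : (0:ℝ) ∈ S := by
    refine ⟨⟨le_rfl, hR⟩, fun s hs => ?_⟩
    have : s = 0 := le_antisymm hs.2 hs.1
    rwa [this]
  have hSbdd : BddAbove S := ⟨R, fun t ht => ht.1.2⟩
  have hSne : S.Nonempty := ⟨0, h0S⟩
  set c := sSup S with hc
  have hc0 : 0 ≤ c := le_csSup hSbdd h0S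
  have hcR : c ≤ R := csSup_le hSne fun t ht => ht.1.2
  -- φ ≤ 0 on [0, c]
  have hkey : ∀ s ∈ Set.Icc (0:ℝ) c, φ s ≤ 0 := by
    have hIco : ∀ s ∈ Set.Ico (0:ℝ) c, φ s ≤ 0 := by
      intro s hs
      obtain ⟨t, htS, hst⟩ := exists_lt_of_lt_csSup hSne hs.2
      exact htS.2 s ⟨hs.1, hst.le⟩
    have hcle : φ c ≤ 0 := by
      rcases eq_or_lt_of_le hc0 with heq | hc0'
      · rw [← heq]; exact hφ0
      · have hne : (𝓝[Set.Ico (0:ℝ) c] c).NeBot := by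
          apply mem_closure_iff_nhdsWithin_neBot.mp
          rw [closure_Ico (ne_of_lt hc0')]
          exact ⟨hc0'.le, le_rfl⟩
        have hcw : ContinuousWithinAt φ (Set.Ico (0:ℝ) c) c :=
          (hφ.continuousWithinAt ⟨hc0, hcR⟩).mono
            (fun t ht => ⟨ht.1, ht.2.le.trans hcR⟩)
        refine le_of_tendsto hcw ?_
        filter_upwards [self_mem_nhdsWithin] with t ht
        exact hIco t ht
    intro s hs
    rcases eq_or_lt_of_le hs.2 with heq | hlt
    · rw [heq]; exact hcle
    · exact hIco s ⟨hs.1, hlt⟩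
  -- show c = R
  rcases eq_or_lt_of_le hcR with heq | hlt
  · rw [heq] at hkey; exact hkey
  exfalso
  -- find d > c with small mass of k on [c, d]
  have hκc : ContinuousWithinAt (fun t => ∫ s in (0:ℝ)..t, k s) (Set.Icc 0 R) c := by
    have : ContinuousOn (fun t => ∫ s in (0:ℝ)..t, k s) (Set.Icc 0 R) := by
      refine (intervalIntegral.continuousOn_primitive hk).congr fun s hs => ?_
      rw [intervalIntegral.integral_of_le hs.1]
    exact this.continuousWithinAt ⟨hc0, hcR⟩
  have hev : ∀ᶠ t in 𝓝[Set.Ioc c R] c,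
      (∫ s in (0:ℝ)..t, k s) < (∫ s in (0:ℝ)..c, k s) + 1/2 := by
    have h1 : ∀ᶠ t in 𝓝[Set.Icc 0 R] c,
        (∫ s in (0:ℝ)..t, k s) < (∫ s in (0:ℝ)..c, k s) + 1/2 :=
      hκc.eventually_lt_const (by linarith)
    exact h1.filter_mono (nhdsWithin_mono c
      (Set.Ioc_subset_Icc_self.trans (Set.Icc_subset_Icc hc0 le_rfl)))
  have hneBot : (𝓝[Set.Ioc c R] c).NeBot := by
    apply mem_closure_iff_nhdsWithin_neBot.mp
    rw [closure_Ioc (ne_of_lt hlt)]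
    exact ⟨le_rfl, hcR⟩
  obtain ⟨d, hd1, hd2⟩ := (hev.and self_mem_nhdsWithin).exists
  -- d ∈ (c, R], ∫_c^d k < 1/2
  have hkd : IntervalIntegrable k volume c d :=
    hkI.mono_set (hsub hc0 hd2.2 (hd2.1.le))
  have hk0c : IntervalIntegrable k volume 0 c :=
    hkI.mono_set (hsub le_rfl hcR hc0)
  have hcd : (∫ s in c..d, k s) < 1/2 := by
    have := intervalIntegral.integral_add_adjacent_intervals hk0c hkd
    linarith [hd1]
  -- max of φ on [c, d]
  obtain ⟨ρ, hρ, hρmax⟩ := isCompact_Icc.exists_isMaxOn (Set.nonempty_Icc.2 hd2.1.le)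
    (hφ.mono (Set.Icc_subset_Icc hc0 hd2.2))
  set M := φ ρ with hM
  have hρR : ρ ∈ Set.Icc (0:ℝ) R := ⟨hc0.trans hρ.1, hρ.2.trans hd2.2⟩
  by_cases hMpos : M ≤ 0
  · -- then d ∈ S, contradicting c = sSup S < d
    have hdS : d ∈ S := by
      refine ⟨⟨hc0.trans hd2.1.le, hd2.2⟩, fun s hs => ?_⟩
      rcases le_or_gt s c with h | h
      · exact hkey s ⟨hs.1, h⟩
      · exact (hρmax ⟨h.le, hs.2⟩).trans hMpos
    exact absurd (le_csSup hSbdd hdS) (not_le.2 hd2.1)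
  push_neg at hMpos
  -- contradiction via the integral inequality at ρ
  have hkφ0c : IntervalIntegrable (fun s => k s * φ s) volume 0 c :=
    hkφI.mono_set (hsub le_rfl hcR hc0)
  have hkφcρ : IntervalIntegrable (fun s => k s * φ s) volume c ρ :=
    hkφI.mono_set (hsub hc0 hρR.2 hρ.1)
  have hkcρ : IntervalIntegrable k volume c ρ :=
    hkI.mono_set (hsub hc0 hρR.2 hρ.1)
  have hkρd : IntervalIntegrable k volume ρ d :=
    hkI.mono_set (hsub hρR.1 hd2.2 hρ.2)
  have h1 : (∫ s in (0:ℝ)..c, k s * φ s) ≤ 0 := by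
    have := intervalIntegral.integral_mono_on hc0 hkφ0c
      (intervalIntegrable_const (c := (0:ℝ)))
      (fun x hx => mul_nonpos_of_nonneg_of_nonpos (hk0 x) (hkey x hx))
    simpa using this
  have h2 : (∫ s in c..ρ, k s * φ s) ≤ ∫ s in c..ρ, k s * M :=
    intervalIntegral.integral_mono_on hρ.1 hkφcρ (hkcρ.mul_const M)
      (fun x hx => mul_le_mul_of_nonneg_left (hρmax ⟨hx.1, hx.2.trans hρ.2⟩) (hk0 x))
  have h3 : (∫ s in c..ρ, k s) ≤ ∫ s in c..d, k s := by
    have hadd := intervalIntegral.integral_add_adjacent_intervals hkcρ hkρd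
    have hnn : 0 ≤ ∫ s in ρ..d, k s :=
      intervalIntegral.integral_nonneg hρ.2 (fun u _ => hk0 u)
    linarith
  have h4 : (∫ s in c..ρ, k s * M) = (∫ s in c..ρ, k s) * M :=
    intervalIntegral.integral_mul_const _ _
  have h5 := intervalIntegral.integral_add_adjacent_intervals hkφ0c hkφcρ
  have h6 := hineq ρ hρR
  have h7 : (∫ s in c..ρ, k s) * M ≤ (∫ s in c..d, k s) * M :=
    mul_le_mul_of_nonneg_right h3 hMpos.le
  have h8 : (∫ s in c..d, k s) * M < (1/2) * M :=
    mul_lt_mul_of_pos_right hcd hMpos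
  have : M < M := by
    calc M = φ ρ := hM
    _ ≤ ∫ s in (0:ℝ)..ρ, k s * φ s := h6
    _ = (∫ s in (0:ℝ)..c, k s * φ s) + ∫ s in c..ρ, k s * φ s := h5.symm
    _ ≤ 0 + (∫ s in c..ρ, k s) * M := by rw [← h4]; exact add_le_add h1 h2
    _ < M := by linarith
  exact lt_irrefl _ this

/-- For a Krein system with a real-valued coefficient, `P_*(r, i)` is a positive real
number for every `r ≥ 0`. -/
theorem krein_Pstar_at_i_pos
    (a : ℝ → ℂ) (P Ps : ℝ → ℂ → ℂ)
    (hK : IsKreinSystem a P Ps)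
    (ha : ∀ r : ℝ, (a r).im = 0) :
    ∀ r : ℝ, 0 ≤ r → (Ps r Complex.I).im = 0 ∧ 0 < (Ps r Complex.I).re := by
  obtain ⟨haInt, hPcont, hPscont, heq⟩ := hK
  set b : ℝ → ℝ := fun s => (a s).re with hb
  have haR : ∀ s, a s = (b s : ℂ) := fun s => by
    apply Complex.ext
    · simp [hb]
    · simp [hb, ha s]
  set x : ℝ → ℝ := fun s => (P s Complex.I).re with hxdef
  set u : ℝ → ℝ := fun s => (P s Complex.I).im with hudef
  set y : ℝ → ℝ := fun s => (Ps s Complex.I).re with hydef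
  set v : ℝ → ℝ := fun s => (Ps s Complex.I).im with hvdef
  -- continuity
  have hIcc : ∀ r : ℝ, Set.Icc (0:ℝ) r ⊆ Set.Ici 0 := fun r t ht => ht.1
  have hxc : ContinuousOn x (Set.Ici 0) := Complex.continuous_re.comp_continuousOn (hPcont _)
  have huc : ContinuousOn u (Set.Ici 0) := Complex.continuous_im.comp_continuousOn (hPcont _)
  have hyc : ContinuousOn y (Set.Ici 0) := Complex.continuous_re.comp_continuousOn (hPscont _)
  have hvc : ContinuousOn v (Set.Ici 0) := Complex.continuous_im.comp_continuousOn (hPscont _)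
  -- integrability of b on compacts
  have hbint : ∀ r : ℝ, 0 ≤ r → IntegrableOn b (Set.Icc 0 r) := fun r hr =>
    (haInt.integrableOn_compact_subset (hIcc r) isCompact_Icc).re
  -- bounded continuous functions are integrable against integrable weights
  have hmul : ∀ (w z : ℝ → ℝ) (r : ℝ), 0 ≤ r → IntegrableOn w (Set.Icc 0 r) →
      ContinuousOn z (Set.Ici 0) → IntegrableOn (fun s => w s * z s) (Set.Icc 0 r) := by
    intro w z r hr hw hz
    have hzc : ContinuousOn z (Set.Icc 0 r) := hz.mono (hIcc r)
    obtain ⟨C, hC⟩ := isCompact_Icc.exists_bound_of_continuousOn hzc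
    have hbnd : ∀ᵐ t ∂(volume.restrict (Set.Icc (0:ℝ) r)), ‖z t‖ ≤ C :=
      (ae_restrict_iff' measurableSet_Icc).2 (Eventually.of_forall fun t ht => hC t ht)
    have := Integrable.bdd_mul (c := C) hw
      (hzc.aestronglyMeasurable measurableSet_Icc) hbnd
    simpa [mul_comm, IntegrableOn] using this
  have hcontInt : ∀ (z : ℝ → ℝ) (r : ℝ), 0 ≤ r → ContinuousOn z (Set.Ici 0) →
      IntegrableOn z (Set.Icc 0 r) := fun z r hr hz =>
    (hz.mono (hIcc r)).integrableOn_compact isCompact_Icc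
  -- the complex integrands, interval integrable
  have hPIint : ∀ r : ℝ, 0 ≤ r →
      IntervalIntegrable (fun s => Complex.I * Complex.I * P s Complex.I
        - (starRingEnd ℂ) (a s) * Ps s Complex.I) volume 0 r := by
    intro r hr
    rw [intervalIntegrable_iff_integrableOn_Icc_of_le hr]
    have h1 : IntegrableOn (fun s => Complex.I * Complex.I * P s Complex.I) (Set.Icc 0 r) :=
      ((((hPcont Complex.I).mono (hIcc r)).const_smul
        (Complex.I * Complex.I)).integrableOn_compact isCompact_Icc)
    have haC : IntegrableOn a (Set.Icc 0 r) :=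
      haInt.integrableOn_compact_subset (hIcc r) isCompact_Icc
    have h2 : IntegrableOn (fun s => (starRingEnd ℂ) (a s) * Ps s Complex.I) (Set.Icc 0 r) := by
      have hPsc : ContinuousOn (fun s => Ps s Complex.I) (Set.Icc 0 r) :=
        (hPscont _).mono (hIcc r)
      obtain ⟨C, hC⟩ := isCompact_Icc.exists_bound_of_continuousOn hPsc
      have hbnd : ∀ᵐ t ∂(volume.restrict (Set.Icc (0:ℝ) r)), ‖Ps t Complex.I‖ ≤ C :=
        (ae_restrict_iff' measurableSet_Icc).2 (Eventually.of_forall fun t ht => hC t ht)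
      have haCc : IntegrableOn (fun s => (starRingEnd ℂ) (a s)) (Set.Icc 0 r) := by
        have : (fun s => (starRingEnd ℂ) (a s)) = a := funext fun s => by
          rw [haR s, Complex.conj_ofReal]
        rw [this]; exact haC
      have := Integrable.bdd_mul (c := C) haCc
        (hPsc.aestronglyMeasurable measurableSet_Icc) hbnd
      simpa [mul_comm, IntegrableOn] using this
    exact h1.sub h2
  have hPsIint : ∀ r : ℝ, 0 ≤ r →
      IntervalIntegrable (fun s => a s * P s Complex.I) volume 0 r := by
    intro r hr
    rw [intervalIntegrable_iff_integrableOn_Icc_of_le hr]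
    have haC : IntegrableOn a (Set.Icc 0 r) :=
      haInt.integrableOn_compact_subset (hIcc r) isCompact_Icc
    have hPc : ContinuousOn (fun s => P s Complex.I) (Set.Icc 0 r) :=
      (hPcont _).mono (hIcc r)
    obtain ⟨C, hC⟩ := isCompact_Icc.exists_bound_of_continuousOn hPc
    have hbnd : ∀ᵐ t ∂(volume.restrict (Set.Icc (0:ℝ) r)), ‖P t Complex.I‖ ≤ C :=
      (ae_restrict_iff' measurableSet_Icc).2 (Eventually.of_forall fun t ht => hC t ht)
    have := Integrable.bdd_mul (c := C) haC
      (hPc.aestronglyMeasurable measurableSet_Icc) hbnd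
    simpa [mul_comm, IntegrableOn] using this
  -- real and imaginary parts of the integral equations
  have hre : ∀ r : ℝ, 0 ≤ r →
      x r = 1 + ∫ s in (0:ℝ)..r, (-(x s) - b s * y s) := by
    intro r hr
    simp only [hxdef, hudef, hydef, hvdef]
    have h1 := congrArg Complex.re (heq Complex.I r hr).1
    have h2 := (Complex.reCLM.intervalIntegral_comp_comm (hPIint r hr)).symm
    simp only [Complex.add_re, Complex.one_re, Complex.reCLM_apply] at h1 h2
    rw [h1, h2]
    congr 1
    refine intervalIntegral.integral_congr fun s _ => ?_
    simp [haR s, Complex.conj_ofReal, Complex.sub_re, Complex.mul_re, Complex.I_re,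
      Complex.I_im, hxdef, hydef, hvdef]
  have him : ∀ r : ℝ, 0 ≤ r →
      u r = ∫ s in (0:ℝ)..r, (-(u s) - b s * v s) := by
    intro r hr
    simp only [hxdef, hudef, hydef, hvdef]
    have h1 := congrArg Complex.im (heq Complex.I r hr).1
    have h2 := (Complex.imCLM.intervalIntegral_comp_comm (hPIint r hr)).symm
    simp only [Complex.add_im, Complex.one_im, Complex.imCLM_apply, zero_add] at h1 h2
    rw [h1, h2]
    refine intervalIntegral.integral_congr fun s _ => ?_
    simp [haR s, Complex.conj_ofReal, Complex.sub_im, Complex.mul_im, Complex.I_re,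
      Complex.I_im, hudef, hvdef, hydef]
  have hsre : ∀ r : ℝ, 0 ≤ r →
      y r = 1 + ∫ s in (0:ℝ)..r, (-(b s * x s)) := by
    intro r hr
    simp only [hxdef, hudef, hydef, hvdef]
    have h1 := congrArg Complex.re (heq Complex.I r hr).2
    have h2 := (Complex.reCLM.intervalIntegral_comp_comm (hPsIint r hr)).symm
    simp only [Complex.sub_re, Complex.one_re, Complex.reCLM_apply] at h1 h2
    have h3 : (∫ s in (0:ℝ)..r, a s * P s Complex.I).re
        = ∫ s in (0:ℝ)..r, b s * x s := by
      rw [h2]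
      refine intervalIntegral.integral_congr fun s _ => ?_
      simp [haR s, Complex.mul_re, hxdef]
    rw [h1, h3, intervalIntegral.integral_neg]
    ring
  have hsim : ∀ r : ℝ, 0 ≤ r →
      v r = ∫ s in (0:ℝ)..r, (-(b s * u s)) := by
    intro r hr
    simp only [hxdef, hudef, hydef, hvdef]
    have h1 := congrArg Complex.im (heq Complex.I r hr).2
    have h2 := (Complex.imCLM.intervalIntegral_comp_comm (hPsIint r hr)).symm
    simp only [Complex.sub_im, Complex.one_im, Complex.imCLM_apply, zero_sub] at h1 h2
    have h3 : (∫ s in (0:ℝ)..r, a s * P s Complex.I).im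
        = ∫ s in (0:ℝ)..r, b s * u s := by
      rw [h2]
      refine intervalIntegral.integral_congr fun s _ => ?_
      simp [haR s, Complex.mul_im, hudef]
    rw [h1, h3, intervalIntegral.integral_neg]
  -- Step 1: realness
  have hreal : ∀ r : ℝ, 0 ≤ r → u r = 0 ∧ v r = 0 := by
    intro R hR
    set k : ℝ → ℝ := fun s => 1 + |b s| with hk
    set φ : ℝ → ℝ := fun s => |u s| + |v s| with hφdef
    have hkint : IntegrableOn k (Set.Icc 0 R) := by
      refine Integrable.add ?_ (hbint R hR).abs
      exact integrableOn_const measure_Icc_lt_top.ne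
    have hk0 : ∀ s, 0 ≤ k s := fun s => by positivity
    have hφcont : ContinuousOn φ (Set.Ici 0) := (huc.abs).add (hvc.abs)
    have hkφ : IntegrableOn (fun s => k s * φ s) (Set.Icc 0 R) :=
      hmul k φ R hR hkint hφcont
    have hineq : ∀ r ∈ Set.Icc (0:ℝ) R, φ r ≤ ∫ s in (0:ℝ)..r, k s * φ s := by
      intro r hr
      have hr0 : 0 ≤ r := hr.1
      have hA : IntervalIntegrable (fun s => -(u s) - b s * v s) volume 0 r := by
        rw [intervalIntegrable_iff_integrableOn_Icc_of_le hr0]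
        exact ((hcontInt u r hr0 huc).neg).sub (hmul b v r hr0 (hbint r hr0) hvc)
      have hB : IntervalIntegrable (fun s => -(b s * u s)) volume 0 r := by
        rw [intervalIntegrable_iff_integrableOn_Icc_of_le hr0]
        exact (hmul b u r hr0 (hbint r hr0) huc).neg
      have h1 : |u r| ≤ ∫ s in (0:ℝ)..r, |(-(u s) - b s * v s)| := by
        rw [him r hr0]
        exact intervalIntegral.abs_integral_le_integral_abs hr0
      have h2 : |v r| ≤ ∫ s in (0:ℝ)..r, |(-(b s * u s))| := by
        rw [hsim r hr0]
        exact intervalIntegral.abs_integral_le_integral_abs hr0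
      have h3 : (∫ s in (0:ℝ)..r, |(-(u s) - b s * v s)|)
          + ∫ s in (0:ℝ)..r, |(-(b s * u s))|
          = ∫ s in (0:ℝ)..r, (|(-(u s) - b s * v s)| + |(-(b s * u s))|) :=
        (intervalIntegral.integral_add hA.abs hB.abs).symm
      have h4 : (∫ s in (0:ℝ)..r, (|(-(u s) - b s * v s)| + |(-(b s * u s))|))
          ≤ ∫ s in (0:ℝ)..r, k s * φ s := by
        refine intervalIntegral.integral_mono_on hr0 (hA.abs.add hB.abs) ?_ ?_
        · rw [intervalIntegrable_iff_integrableOn_Icc_of_le hr0]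
          exact hkφ.mono_set (Set.Icc_subset_Icc le_rfl hr.2)
        · intro t _
          have e1 : |(-(u t) - b t * v t)| ≤ |u t| + |b t| * |v t| := by
            calc |(-(u t) - b t * v t)| = |(-(u t)) + (-(b t * v t))| := by
                  exact congrArg abs (by ring)
            _ ≤ |(-(u t))| + |(-(b t * v t))| := abs_add_le _ _
            _ = |u t| + |b t| * |v t| := by rw [abs_neg, abs_neg, abs_mul]
          have e2 : |(-(b t * u t))| = |b t| * |u t| := by rw [abs_neg, abs_mul]
          have n1 := abs_nonneg (u t)
          have n2 := abs_nonneg (v t)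
          have n3 := abs_nonneg (b t)
          simp only [hk, hφdef]
          nlinarith
      calc φ r = |u r| + |v r| := rfl
      _ ≤ (∫ s in (0:ℝ)..r, |(-(u s) - b s * v s)|)
          + ∫ s in (0:ℝ)..r, |(-(b s * u s))| := add_le_add h1 h2
      _ = _ := h3
      _ ≤ _ := h4
    have hφle := krein_gronwall_zero k φ R hR hkint hk0 (hφcont.mono (hIcc R)) hkφ hineq
    have hφR := hφle R ⟨hR, le_rfl⟩
    have n1 := abs_nonneg (u R)
    have n2 := abs_nonneg (v R)
    simp only [hφdef] at hφR
    constructor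
    · exact abs_eq_zero.mp (by linarith)
    · exact abs_eq_zero.mp (by linarith)
  -- Step 2: the key identity y r ^ 2 = x r ^ 2 + ∫ 2 x ^2
  have hZ : ∀ r : ℝ, 0 ≤ r → y r * y r = x r * x r + ∫ s in (0:ℝ)..r, 2 * x s ^ 2 := by
    intro r hr
    set f : ℝ → ℝ := fun s => -(x s) - b s * y s with hf
    set g : ℝ → ℝ := fun s => -(b s * x s) with hg
    have hfint : IntegrableOn f (Set.Icc 0 r) :=
      ((hcontInt x r hr hxc).neg).sub (hmul b y r hr (hbint r hr) hyc)
    have hgint : IntegrableOn g (Set.Icc 0 r) := (hmul b x r hr (hbint r hr) hxc).neg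
    have hxs : ∀ s ∈ Set.Icc (0:ℝ) r, x s = 1 + ∫ t in (0:ℝ)..s, f t := fun s hs =>
      hre s hs.1
    have hys : ∀ s ∈ Set.Icc (0:ℝ) r, y s = 1 + ∫ t in (0:ℝ)..s, g t := fun s hs =>
      hsre s hs.1
    have hxx := krein_primitive_mul f f x x 1 1 r hr hfint hfint hxs hxs
      (krein_parts_aux f f r hr hfint hfint)
    have hyy := krein_primitive_mul g g y y 1 1 r hr hgint hgint hys hys
      (krein_parts_aux g g r hr hgint hgint)
    have hxfI : IntervalIntegrable (fun s => x s * f s + x s * f s) volume 0 r := by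
      rw [intervalIntegrable_iff_integrableOn_Icc_of_le hr]
      have hx1 : IntegrableOn (fun s => x s * f s) (Set.Icc 0 r) := by
        have := hmul f x r hr hfint hxc
        simpa [mul_comm] using this
      exact hx1.add hx1
    have hygI : IntervalIntegrable (fun s => y s * g s + y s * g s) volume 0 r := by
      rw [intervalIntegrable_iff_integrableOn_Icc_of_le hr]
      have hy1 : IntegrableOn (fun s => y s * g s) (Set.Icc 0 r) := by
        have := hmul g y r hr hgint hyc
        simpa [mul_comm] using this
      exact hy1.add hy1
    have hsub : (∫ s in (0:ℝ)..r, (y s * g s + y s * g s))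
        - (∫ s in (0:ℝ)..r, (x s * f s + x s * f s))
        = ∫ s in (0:ℝ)..r, 2 * x s ^ 2 := by
      rw [← intervalIntegral.integral_sub hygI hxfI]
      refine intervalIntegral.integral_congr fun s _ => ?_
      simp only [hf, hg]
      ring
    linarith [hxx, hyy, hsub]
  have hx0 : x 0 = 1 := by
    have := hre 0 le_rfl
    simpa using this
  have hy0 : y 0 = 1 := by
    have := hsre 0 le_rfl
    simpa using this
  -- Step 3: y r * y r > 0 for r > 0
  have hZpos : ∀ r : ℝ, 0 < r → 0 < y r * y r := by
    intro r hr
    have hcw : ContinuousWithinAt x (Set.Ici 0) 0 :=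
      hxc.continuousWithinAt Set.self_mem_Ici
    have hev : ∀ᶠ t in 𝓝[Set.Ici (0:ℝ)] 0, 1/2 < x t := by
      refine hcw ?_
      rw [hx0]
      exact lt_mem_nhds (by norm_num)
    obtain ⟨δ, hδ0, hδ⟩ := Metric.mem_nhdsWithin_iff.mp hev
    set ε := min (δ/2) r with hε
    have hε0 : 0 < ε := lt_min (by linarith) hr
    have hεr : ε ≤ r := min_le_right _ _
    have hεhalf : ∀ t ∈ Set.Icc (0:ℝ) ε, 1/2 < x t := by
      intro t ht
      refine hδ ⟨?_, ht.1⟩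
      rw [Metric.mem_ball, Real.dist_eq, sub_zero, abs_of_nonneg ht.1]
      calc t ≤ ε := ht.2
      _ ≤ δ/2 := min_le_left _ _
      _ < δ := by linarith
    have hx2c : ContinuousOn (fun s => 2 * x s ^ 2) (Set.Ici 0) :=
      continuousOn_const.mul (hxc.pow 2)
    have hx2int : IntervalIntegrable (fun s => 2 * x s ^ 2) volume 0 r := by
      rw [intervalIntegrable_iff_integrableOn_Icc_of_le hr.le]
      exact hcontInt _ r hr.le hx2c
    have hx2ε : IntervalIntegrable (fun s => 2 * x s ^ 2) volume 0 ε := by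
      refine hx2int.mono_set ?_
      rw [Set.uIcc_of_le hε0.le, Set.uIcc_of_le hr.le]
      exact Set.Icc_subset_Icc le_rfl hεr
    have hx2εr : IntervalIntegrable (fun s => 2 * x s ^ 2) volume ε r := by
      refine hx2int.mono_set ?_
      rw [Set.uIcc_of_le hεr, Set.uIcc_of_le hr.le]
      exact Set.Icc_subset_Icc hε0.le le_rfl
    have hsplit := intervalIntegral.integral_add_adjacent_intervals hx2ε hx2εr
    have hI1 : ε * (1/2) ≤ ∫ s in (0:ℝ)..ε, 2 * x s ^ 2 := by
      have hmono := intervalIntegral.integral_mono_on hε0.le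
        (intervalIntegrable_const (c := (1/2:ℝ))) hx2ε
        (fun t ht => by nlinarith [hεhalf t ht])
      simpa using hmono
    have hI2 : 0 ≤ ∫ s in ε..r, 2 * x s ^ 2 :=
      intervalIntegral.integral_nonneg hεr (fun t _ => by positivity)
    have hzr := hZ r hr.le
    nlinarith [mul_self_nonneg (x r)]
  -- Step 4: y r > 0 for all r ≥ 0
  have hypos : ∀ r : ℝ, 0 ≤ r → 0 < y r := by
    intro r hr
    rcases eq_or_lt_of_le hr with heq | hr'
    · rw [← heq, hy0]; norm_num
    by_contra hneg
    push_neg at hneg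
    have hyr : y r < 0 := by
      rcases lt_or_eq_of_le hneg with h | h
      · exact h
      · exfalso
        have := hZpos r hr'
        rw [h] at this
        norm_num at this
    have hivt := intermediate_value_Icc' hr (hyc.mono (hIcc r))
    have hmem : (0:ℝ) ∈ Set.Icc (y r) (y 0) := by
      rw [hy0]
      exact ⟨hyr.le, by norm_num⟩
    obtain ⟨s, hs, hys⟩ := hivt hmem
    rcases eq_or_lt_of_le hs.1 with heq0 | hs0
    · rw [← heq0, hy0] at hys
      norm_num at hys
    · have := hZpos s hs0
      rw [hys] at this
      simp at this
  intro r hr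
  exact ⟨(hreal r hr).2, hypos r hr⟩

end
end
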